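/- arXiv:2008.08641 — 6 statements merged into one kernel-verified Lean document; each statement's English description precedes it below -/
import Mathlib

section
/- Let n ∈ ℕ and α, β > −1 be real, and let Ỹ(x) = (1−x)^((α+1)/2)·(1+x)^((β+1)/2)·P_n^{(α,β)}(x) for x ∈ (−1,1). Then Ỹ is twice differentiable on (−1,1) and satisfies Ỹ''(x) + Ω(x)Ỹ(x) = 0 for all x ∈ (−1,1), where Ω(x) = [(L²−1)(1−x²) − 2(α²−1)(1+x) − 2(β²−1)(1−x)] / (4(1−x²)²). -/
open Real Filter Set

/-- Generalized binomial coefficient `C(t, k) = t(t-1)⋯(t-k+1)/k!`. -/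
noncomputable def genBinom (t : ℝ) (k : ℕ) : ℝ :=
  (∏ i ∈ Finset.range k, (t - i)) / (Nat.factorial k)

/-- The Jacobi polynomial `P_n^{(α,β)}(x)`. -/
noncomputable def jacobiP (n : ℕ) (α β : ℝ) (x : ℝ) : ℝ :=
  ∑ m ∈ Finset.range (n + 1),
    genBinom (n + α) m * genBinom (n + β) (n - m) * ((x - 1) / 2) ^ (n - m) * ((x + 1) / 2) ^ m

namespace JacobiAux

lemma genBinom_succ (t : ℝ) (k : ℕ) :
    genBinom t (k + 1) * (k + 1) = genBinom t k * (t - k) := by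
  unfold genBinom
  rw [Finset.prod_range_succ, Nat.factorial_succ]
  have h1 : (Nat.factorial k : ℝ) ≠ 0 := Nat.cast_ne_zero.mpr (Nat.factorial_ne_zero k)
  have h2 : ((k : ℝ) + 1) ≠ 0 := by positivity
  push_cast
  field_simp

noncomputable def uv (p m : ℕ) (x : ℝ) : ℝ := ((x - 1) / 2) ^ p * ((x + 1) / 2) ^ m

noncomputable def duv (p m : ℕ) (x : ℝ) : ℝ :=
  ((p : ℝ) / 2) * uv (p - 1) m x + ((m : ℝ) / 2) * uv p (m - 1) x

lemma hasDerivAt_uv (p m : ℕ) (x : ℝ) :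
    HasDerivAt (fun y => uv p m y) (duv p m x) x := by
  have hu : HasDerivAt (fun y : ℝ => (y - 1) / 2) (1 / 2) x := by
    simpa using ((hasDerivAt_id x).sub_const 1).div_const 2
  have hv : HasDerivAt (fun y : ℝ => (y + 1) / 2) (1 / 2) x := by
    simpa using ((hasDerivAt_id x).add_const 1).div_const 2
  have h := (hu.pow p).mul (hv.pow m)
  have he : duv p m x = (↑p * ((x - 1) / 2) ^ (p - 1) * (1 / 2)) * ((x + 1) / 2) ^ m
      + ((x - 1) / 2) ^ p * (↑m * ((x + 1) / 2) ^ (m - 1) * (1 / 2)) := by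
    unfold duv uv; ring
  rw [he]
  exact h

noncomputable def A (n : ℕ) (α β : ℝ) (m : ℕ) : ℝ :=
  genBinom (n + α) m * genBinom (n + β) (n - m)

noncomputable def P1 (n : ℕ) (α β : ℝ) (x : ℝ) : ℝ :=
  ∑ m ∈ Finset.range (n + 1), A n α β m * duv (n - m) m x

noncomputable def P2 (n : ℕ) (α β : ℝ) (x : ℝ) : ℝ :=
  ∑ m ∈ Finset.range (n + 1), A n α β m *
    (((n - m : ℕ) : ℝ) / 2 * duv (n - m - 1) m x + ((m : ℝ) / 2) * duv (n - m) (m - 1) x)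

lemma jacobiP_eq (n : ℕ) (α β x : ℝ) :
    jacobiP n α β x = ∑ m ∈ Finset.range (n + 1), A n α β m * uv (n - m) m x := by
  unfold jacobiP A uv
  exact Finset.sum_congr rfl fun m _ => by ring

lemma hasDerivAt_jacobiP (n : ℕ) (α β x : ℝ) :
    HasDerivAt (jacobiP n α β) (P1 n α β x) x := by
  have hfun : jacobiP n α β = fun y => ∑ m ∈ Finset.range (n + 1), A n α β m * uv (n - m) m y :=
    funext fun y => jacobiP_eq n α β y
  rw [hfun]
  exact HasDerivAt.fun_sum fun m _ => HasDerivAt.const_mul _ (hasDerivAt_uv _ _ x)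

lemma hasDerivAt_P1 (n : ℕ) (α β x : ℝ) :
    HasDerivAt (P1 n α β) (P2 n α β x) x := by
  unfold P1 P2
  refine HasDerivAt.fun_sum fun m _ => HasDerivAt.const_mul _ ?_
  exact (HasDerivAt.const_mul _ (hasDerivAt_uv _ _ x)).add
    (HasDerivAt.const_mul _ (hasDerivAt_uv _ _ x))

lemma coeff_rec (n : ℕ) (α β : ℝ) (m : ℕ) (h : m < n) :
    A n α β m * ((n : ℝ) - m) * ((n : ℝ) + α - m)
      = A n α β (m + 1) * ((m : ℝ) + 1) * ((m : ℝ) + 1 + β) := by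
  unfold A
  have e1 := genBinom_succ ((n : ℝ) + α) m
  have e2 := genBinom_succ ((n : ℝ) + β) (n - m - 1)
  rw [show n - m - 1 + 1 = n - m from by omega] at e2
  have hc : ((n - m - 1 : ℕ) : ℝ) = (n : ℝ) - m - 1 := by
    rw [show n - m - 1 = n - (m + 1) from by omega, Nat.cast_sub (by omega : m + 1 ≤ n)]
    push_cast; ring
  rw [hc] at e2
  have hsub : n - (m + 1) = n - m - 1 := by omega
  rw [hsub]
  linear_combination (genBinom ((n : ℝ) + α) m * ((n : ℝ) + α - m)) * e2 -
    (genBinom ((n : ℝ) + β) (n - m - 1) * (β + (m : ℝ) + 1)) * e1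

noncomputable def S1 (n : ℕ) (α β : ℝ) (m : ℕ) (x : ℝ) : ℝ :=
  A n α β m * ((n : ℝ) - m) * ((n : ℝ) + α - m) * uv (n - m) m x

noncomputable def S2 (n : ℕ) (α β : ℝ) (m : ℕ) (x : ℝ) : ℝ :=
  A n α β m * (m : ℝ) * ((m : ℝ) + β) * uv (n - m) m x

noncomputable def Hh (n : ℕ) (α β : ℝ) (m : ℕ) (x : ℝ) : ℝ :=
  A n α β m * ((n : ℝ) - m) * ((n : ℝ) + α - m) * uv (n - m - 1) (m + 1) x

noncomputable def Gg (n : ℕ) (α β : ℝ) (m : ℕ) (x : ℝ) : ℝ :=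
  A n α β m * (m : ℝ) * ((m : ℝ) + β) * uv (n - m + 1) (m - 1) x

lemma per_term (n : ℕ) (α β : ℝ) (m : ℕ) (hm : m ≤ n) (x : ℝ) :
    (1 - x ^ 2) * (A n α β m *
        (((n - m : ℕ) : ℝ) / 2 * duv (n - m - 1) m x + ((m : ℝ) / 2) * duv (n - m) (m - 1) x))
      + (β - α - (α + β + 2) * x) * (A n α β m * duv (n - m) m x)
      + ((n : ℝ) * ((n : ℝ) + α + β + 1)) * (A n α β m * uv (n - m) m x)
      = (S1 n α β m x + S2 n α β m x) - (Hh n α β m x + Gg n α β m x) := by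
  obtain ⟨p, rfl⟩ : ∃ p, n = m + p := ⟨n - m, by omega⟩
  simp only [S1, S2, Hh, Gg, Nat.add_sub_cancel_left]
  rcases p with _ | _ | q <;> rcases m with _ | _ | k <;>
    simp only [uv, duv, Nat.succ_sub_one, Nat.zero_sub, Nat.sub_zero, Nat.sub_self,
      Nat.cast_zero, Nat.cast_one, Nat.cast_succ, Nat.cast_add, Nat.cast_ofNat,
      pow_zero, pow_one] <;>
    push_cast <;> ring

lemma sum_S1_eq (n : ℕ) (α β x : ℝ) :
    ∑ m ∈ Finset.range (n + 1), S1 n α β m x = ∑ m ∈ Finset.range (n + 1), Gg n α β m x := by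
  rw [Finset.sum_range_succ, Finset.sum_range_succ']
  have h1 : S1 n α β n x = 0 := by simp [S1]
  have h2 : Gg n α β 0 x = 0 := by simp [Gg]
  rw [h1, h2, add_zero, add_zero]
  refine Finset.sum_congr rfl fun m hm => ?_
  have hmn : m < n := Finset.mem_range.mp hm
  unfold S1 Gg
  rw [show n - (m + 1) + 1 = n - m from by omega, show m + 1 - 1 = m from rfl]
  have := coeff_rec n α β m hmn
  push_cast
  linear_combination uv (n - m) m x * this

lemma sum_S2_eq (n : ℕ) (α β x : ℝ) :
    ∑ m ∈ Finset.range (n + 1), S2 n α β m x = ∑ m ∈ Finset.range (n + 1), Hh n α β m x := by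
  rw [Finset.sum_range_succ', Finset.sum_range_succ]
  have h1 : S2 n α β 0 x = 0 := by simp [S2]
  have h2 : Hh n α β n x = 0 := by simp [Hh]
  rw [h1, h2, add_zero, add_zero]
  refine Finset.sum_congr rfl fun m hm => ?_
  have hmn : m < n := Finset.mem_range.mp hm
  unfold S2 Hh
  rw [show n - (m + 1) = n - m - 1 from by omega]
  have := coeff_rec n α β m hmn
  push_cast
  linear_combination (-(uv (n - m - 1) (m + 1) x)) * this

lemma jacobi_ode (n : ℕ) (α β x : ℝ) :
    (1 - x ^ 2) * P2 n α β x + (β - α - (α + β + 2) * x) * P1 n α β x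
      + ((n : ℝ) * ((n : ℝ) + α + β + 1)) * jacobiP n α β x = 0 := by
  rw [jacobiP_eq]
  unfold P1 P2
  rw [Finset.mul_sum, Finset.mul_sum, Finset.mul_sum, ← Finset.sum_add_distrib,
    ← Finset.sum_add_distrib]
  have hsum := Finset.sum_congr rfl fun m hm =>
    per_term n α β m (Nat.lt_succ_iff.mp (Finset.mem_range.mp hm)) x
  rw [hsum, Finset.sum_sub_distrib, Finset.sum_add_distrib, Finset.sum_add_distrib,
    sum_S1_eq, sum_S2_eq]
  ring

noncomputable def Wf (α β : ℝ) (x : ℝ) : ℝ := (1 - x) ^ ((α + 1) / 2) * (1 + x) ^ ((β + 1) / 2)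

noncomputable def rf (α β : ℝ) (x : ℝ) : ℝ := (β + 1) / (2 * (1 + x)) - (α + 1) / (2 * (1 - x))

noncomputable def rf' (α β : ℝ) (x : ℝ) : ℝ :=
  -(β + 1) / (2 * (1 + x) ^ 2) - (α + 1) / (2 * (1 - x) ^ 2)

lemma hasDerivAt_Wf (α β : ℝ) {x : ℝ} (h1 : 0 < 1 - x) (h2 : 0 < 1 + x) :
    HasDerivAt (Wf α β) (Wf α β x * rf α β x) x := by
  have hA : HasDerivAt (fun y : ℝ => (1 - y) ^ ((α + 1) / 2))
      ((α + 1) / 2 * (1 - x) ^ ((α + 1) / 2 - 1) * (-1)) x := by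
    have hi : HasDerivAt (fun y : ℝ => 1 - y) (-1) x := by
      simpa using (hasDerivAt_id' x).const_sub (1 : ℝ)
    exact (Real.hasDerivAt_rpow_const (p := (α + 1) / 2) (Or.inl h1.ne')).comp x hi
  have hB : HasDerivAt (fun y : ℝ => (1 + y) ^ ((β + 1) / 2))
      ((β + 1) / 2 * (1 + x) ^ ((β + 1) / 2 - 1) * 1) x := by
    have hi : HasDerivAt (fun y : ℝ => 1 + y) (1) x := by
      simpa using (hasDerivAt_id' x).const_add (1 : ℝ)
    exact (Real.hasDerivAt_rpow_const (p := (β + 1) / 2) (Or.inl h2.ne')).comp x hi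
  have h := hA.mul hB
  have he : (α + 1) / 2 * (1 - x) ^ ((α + 1) / 2 - 1) * (-1) * (1 + x) ^ ((β + 1) / 2)
      + (1 - x) ^ ((α + 1) / 2) * ((β + 1) / 2 * (1 + x) ^ ((β + 1) / 2 - 1) * 1)
      = Wf α β x * rf α β x := by
    rw [Real.rpow_sub_one h1.ne', Real.rpow_sub_one h2.ne']
    unfold Wf rf
    field_simp
    ring
  rw [← he]
  exact h

lemma hasDerivAt_rf (α β : ℝ) {x : ℝ} (h1 : 0 < 1 - x) (h2 : 0 < 1 + x) :
    HasDerivAt (rf α β) (rf' α β x) x := by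
  have hA : HasDerivAt (fun y : ℝ => (β + 1) / (2 * (1 + y)))
      ((0 * (2 * (1 + x)) - (β + 1) * 2) / (2 * (1 + x)) ^ 2) x := by
    refine (hasDerivAt_const x (β + 1)).div ?_ (by positivity)
    simpa using ((hasDerivAt_const x (1 : ℝ)).add (hasDerivAt_id x)).const_mul (2 : ℝ)
  have hB : HasDerivAt (fun y : ℝ => (α + 1) / (2 * (1 - y)))
      ((0 * (2 * (1 - x)) - (α + 1) * (2 * (0 - 1))) / (2 * (1 - x)) ^ 2) x := by
    refine (hasDerivAt_const x (α + 1)).div ?_ (by positivity)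
    exact ((hasDerivAt_const x (1 : ℝ)).sub (hasDerivAt_id x)).const_mul (2 : ℝ)
  have h := hA.sub hB
  have he : (0 * (2 * (1 + x)) - (β + 1) * 2) / (2 * (1 + x)) ^ 2
      - (0 * (2 * (1 - x)) - (α + 1) * (2 * (0 - 1))) / (2 * (1 - x)) ^ 2 = rf' α β x := by
    unfold rf'
    field_simp
    ring
  rw [← he]
  exact h

noncomputable def F0 (n : ℕ) (α β : ℝ) (x : ℝ) : ℝ := Wf α β x * jacobiP n α β x

noncomputable def F1 (n : ℕ) (α β : ℝ) (x : ℝ) : ℝ :=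
  Wf α β x * rf α β x * jacobiP n α β x + Wf α β x * P1 n α β x

noncomputable def F2 (n : ℕ) (α β : ℝ) (x : ℝ) : ℝ :=
  ((Wf α β x * rf α β x * rf α β x + Wf α β x * rf' α β x) * jacobiP n α β x
      + Wf α β x * rf α β x * P1 n α β x)
    + (Wf α β x * rf α β x * P1 n α β x + Wf α β x * P2 n α β x)

lemma hasDerivAt_F0 (n : ℕ) (α β : ℝ) {x : ℝ} (h1 : 0 < 1 - x) (h2 : 0 < 1 + x) :
    HasDerivAt (F0 n α β) (F1 n α β x) x := by
  unfold F0 F1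
  exact (hasDerivAt_Wf α β h1 h2).mul (hasDerivAt_jacobiP n α β x)

lemma hasDerivAt_F1 (n : ℕ) (α β : ℝ) {x : ℝ} (h1 : 0 < 1 - x) (h2 : 0 < 1 + x) :
    HasDerivAt (F1 n α β) (F2 n α β x) x := by
  unfold F1 F2
  have hW := hasDerivAt_Wf α β h1 h2
  have hr := hasDerivAt_rf α β h1 h2
  have hP := hasDerivAt_jacobiP n α β x
  have hP1 := hasDerivAt_P1 n α β x
  have g1 : HasDerivAt (fun y => Wf α β y * rf α β y * jacobiP n α β y)
      ((Wf α β x * rf α β x * rf α β x + Wf α β x * rf' α β x) * jacobiP n α β x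
        + Wf α β x * rf α β x * P1 n α β x) x := by
    have := (hW.fun_mul hr).fun_mul hP
    convert this using 1
  exact g1.add (hW.mul hP1)

lemma final_identity (n : ℕ) (α β : ℝ) {x : ℝ} (h1 : 0 < 1 - x) (h2 : 0 < 1 + x) :
    F2 n α β x +
      (((2 * (n : ℝ) + α + β + 1) ^ 2 - 1) * (1 - x ^ 2) - 2 * (α ^ 2 - 1) * (1 + x)
        - 2 * (β ^ 2 - 1) * (1 - x)) / (4 * (1 - x ^ 2) ^ 2) * F0 n α β x = 0 := by
  have hode := jacobi_ode n α β x
  have h12 : (1 : ℝ) - x ^ 2 ≠ 0 := by nlinarith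
  have key : F2 n α β x +
      (((2 * (n : ℝ) + α + β + 1) ^ 2 - 1) * (1 - x ^ 2) - 2 * (α ^ 2 - 1) * (1 + x)
        - 2 * (β ^ 2 - 1) * (1 - x)) / (4 * (1 - x ^ 2) ^ 2) * F0 n α β x
      = (Wf α β x / (1 - x ^ 2)) *
        ((1 - x ^ 2) * P2 n α β x + (β - α - (α + β + 2) * x) * P1 n α β x
          + ((n : ℝ) * ((n : ℝ) + α + β + 1)) * jacobiP n α β x) := by
    unfold F2 F0 rf rf'
    field_simp
    ring
  rw [key, hode, mul_zero]

end JacobiAux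

theorem stmt2 (n : ℕ) (α β : ℝ) (hα : -1 < α) (hβ : -1 < β)
    (Y : ℝ → ℝ)
    (hY : ∀ x ∈ Set.Ioo (-1 : ℝ) 1,
      Y x = (1 - x) ^ ((α + 1) / 2) * (1 + x) ^ ((β + 1) / 2) * jacobiP n α β x)
    (L : ℝ) (hL : L = 2 * n + α + β + 1)
    (Ω : ℝ → ℝ)
    (hΩ : ∀ x ∈ Set.Ioo (-1 : ℝ) 1,
      Ω x = ((L ^ 2 - 1) * (1 - x ^ 2) - 2 * (α ^ 2 - 1) * (1 + x)
        - 2 * (β ^ 2 - 1) * (1 - x)) / (4 * (1 - x ^ 2) ^ 2)) :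
    (∀ x ∈ Set.Ioo (-1 : ℝ) 1, DifferentiableAt ℝ Y x ∧ DifferentiableAt ℝ (deriv Y) x) ∧
    ∀ x ∈ Set.Ioo (-1 : ℝ) 1, deriv (deriv Y) x + Ω x * Y x = 0 := by
  have hder1 : ∀ x ∈ Set.Ioo (-1 : ℝ) 1, HasDerivAt Y (JacobiAux.F1 n α β x) x := by
    intro x hx
    have h1 : (0 : ℝ) < 1 - x := by linarith [hx.2]
    have h2 : (0 : ℝ) < 1 + x := by linarith [hx.1]
    have hev : Y =ᶠ[nhds x] JacobiAux.F0 n α β :=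
      Filter.eventuallyEq_of_mem (isOpen_Ioo.mem_nhds hx) (fun y hy => hY y hy)
    exact (JacobiAux.hasDerivAt_F0 n α β h1 h2).congr_of_eventuallyEq hev
  have hder2 : ∀ x ∈ Set.Ioo (-1 : ℝ) 1, HasDerivAt (deriv Y) (JacobiAux.F2 n α β x) x := by
    intro x hx
    have h1 : (0 : ℝ) < 1 - x := by linarith [hx.2]
    have h2 : (0 : ℝ) < 1 + x := by linarith [hx.1]
    have hev2 : deriv Y =ᶠ[nhds x] JacobiAux.F1 n α β :=
      Filter.eventuallyEq_of_mem (isOpen_Ioo.mem_nhds hx) (fun y hy => (hder1 y hy).deriv)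
    exact (JacobiAux.hasDerivAt_F1 n α β h1 h2).congr_of_eventuallyEq hev2
  refine ⟨fun x hx => ⟨(hder1 x hx).differentiableAt, (hder2 x hx).differentiableAt⟩, ?_⟩
  intro x hx
  have h1 : (0 : ℝ) < 1 - x := by linarith [hx.2]
  have h2 : (0 : ℝ) < 1 + x := by linarith [hx.1]
  rw [(hder2 x hx).deriv, hΩ x hx, hY x hx, hL]
  exact JacobiAux.final_identity n α β h1 h2
end

section
/- Let n ∈ ℕ and α, β > −1 be real, and define Y(θ) = (1−cos θ)^((2α+1)/4)·(1+cos θ)^((2β+1)/4)·P_n^{(α,β)}(cos θ) for θ ∈ (0,π). Then Y is twice differentiable on (0,π) and satisfies Y''(θ) + Ω(θ)Y(θ) = 0 for all θ ∈ (0,π), where Ω(θ) = L²/4 − (α² − 1/4)/(2(1 − cos θ)) − (β² − 1/4)/(2(1 + cos θ)). -/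
open Real Filter Set

lemma genBinom_succ (t : ℝ) (k : ℕ) :
    genBinom t (k+1) * (k+1) = genBinom t k * (t - k) := by
  unfold genBinom
  rw [Finset.prod_range_succ, Nat.factorial_succ]
  have h1 : ((k+1).factorial : ℝ) ≠ 0 := by positivity
  have h2 : (k.factorial : ℝ) ≠ 0 := by positivity
  field_simp [Nat.factorial_succ]
  push_cast
  ring

namespace StmtAux

noncomputable def cc (n : ℕ) (α β : ℝ) (m : ℕ) : ℝ :=
  genBinom (n + α) m * genBinom (n + β) (n - m)

noncomputable def gg (k m : ℕ) (x : ℝ) : ℝ := ((x - 1) / 2) ^ k * ((x + 1) / 2) ^ m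

noncomputable def ggD (k m : ℕ) (x : ℝ) : ℝ :=
  ((k : ℝ) * gg (k-1) m x + (m : ℝ) * gg k (m-1) x) / 2

lemma hasDerivAt_gg (k m : ℕ) (x : ℝ) : HasDerivAt (gg k m) (ggD k m x) x := by
  have hs : HasDerivAt (fun x : ℝ => (x - 1) / 2) (1/2) x := by
    simpa using ((hasDerivAt_id x).sub_const 1).div_const 2
  have ht : HasDerivAt (fun x : ℝ => (x + 1) / 2) (1/2) x := by
    simpa using ((hasDerivAt_id x).add_const 1).div_const 2
  have := (hs.pow k).mul (ht.pow m)
  refine this.congr_deriv (Eq.symm ?_)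
  unfold ggD gg
  simp only [Pi.pow_apply]
  ring

noncomputable def P1 (n : ℕ) (α β x : ℝ) : ℝ :=
  ∑ m ∈ Finset.range (n+1), cc n α β m * ggD (n-m) m x

noncomputable def P2 (n : ℕ) (α β x : ℝ) : ℝ :=
  ∑ m ∈ Finset.range (n+1),
    cc n α β m * ((((n-m : ℕ) : ℝ) * ggD (n-m-1) m x + (m : ℝ) * ggD (n-m) (m-1) x) / 2)

lemma jacobiP_eq (n : ℕ) (α β : ℝ) :
    jacobiP n α β = fun x => ∑ m ∈ Finset.range (n+1), cc n α β m * gg (n-m) m x := by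
  funext x
  unfold jacobiP cc gg
  refine Finset.sum_congr rfl fun m _ => by ring

lemma hasDerivAt_P (n : ℕ) (α β x : ℝ) :
    HasDerivAt (jacobiP n α β) (P1 n α β x) x := by
  rw [jacobiP_eq]
  exact HasDerivAt.fun_sum fun m _ => (hasDerivAt_gg (n-m) m x).const_mul _

lemma hasDerivAt_P1 (n : ℕ) (α β x : ℝ) :
    HasDerivAt (fun x => P1 n α β x) (P2 n α β x) x := by
  unfold P1
  refine HasDerivAt.fun_sum fun m _ => ?_
  have h1 := hasDerivAt_gg (n-m-1) m x
  have h2 := hasDerivAt_gg (n-m) (m-1) x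
  have : HasDerivAt (fun y => ((((n-m : ℕ):ℝ)) * gg (n-m-1) m y + (m:ℝ) * gg (n-m) (m-1) y) / 2)
      (((((n-m : ℕ):ℝ)) * ggD (n-m-1) m x + (m:ℝ) * ggD (n-m) (m-1) x) / 2) x :=
    ((h1.const_mul _).add (h2.const_mul _)).div_const 2
  simpa only [ggD] using this.const_mul (cc n α β m)

noncomputable def EE (n : ℕ) (α β x : ℝ) : ℕ → ℝ
  | 0 => 0
  | (m+1) => ((n:ℝ)-m) * ((n:ℝ)-m+α) * cc n α β m * (gg (n-m) m x - gg (n-m-1) (m+1) x)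

lemma step (n : ℕ) (α β x : ℝ) (m : ℕ) (hm : m ≤ n) :
    (1-x^2) * (cc n α β m * ((((n-m : ℕ):ℝ) * ggD (n-m-1) m x + (m:ℝ) * ggD (n-m) (m-1) x) / 2))
    + (β-α-(α+β+2)*x) * (cc n α β m * ggD (n-m) m x)
    + ((n:ℝ)*((n:ℝ)+α+β+1)) * (cc n α β m * gg (n-m) m x)
    = EE n α β x (m+1) - EE n α β x m := by
  obtain ⟨k, rfl⟩ : ∃ k, n = m + k := ⟨n - m, by omega⟩
  rcases m with _ | m
  · -- m = 0
    simp only [EE, ggD, gg, Nat.zero_add, Nat.sub_zero, Nat.zero_sub]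
    rcases k with _ | k
    · push_cast
      ring
    · simp only [Nat.add_sub_cancel]
      rcases k with _ | k
      · push_cast; ring
      · simp only [Nat.add_sub_cancel]; push_cast; ring
  · -- m = m+1
    have E1 : m + 1 + k - (m + 1) = k := by omega
    have E3 : m + 1 + k - m = k + 1 := by omega
    have hw : ((↑(m+1+k) : ℝ) - (m:ℝ)) * ((↑(m+1+k) : ℝ) - (m:ℝ) + α) * cc (m+1+k) α β m
        = ((m:ℝ)+1) * (((m:ℝ)+1) + β) * cc (m+1+k) α β (m+1) := by
      unfold cc
      rw [E3, E1]
      have R1 := genBinom_succ ((↑(m+1+k) : ℝ) + α) m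
      have R2 := genBinom_succ ((↑(m+1+k) : ℝ) + β) k
      push_cast at R1 R2 ⊢
      linear_combination (-(((k:ℝ)+1)) * genBinom ((↑m+1+↑k : ℝ) + β) (k+1)) * R1
        + (((m:ℝ)+1) * genBinom ((↑m+1+↑k : ℝ) + α) (m+1)) * R2
    simp only [EE, ggD, gg]
    rw [E1, E3, hw]
    simp only [Nat.add_sub_cancel]
    rcases m with _ | m
    · simp only [Nat.zero_sub]
      rcases k with _ | k
      · push_cast; ring
      · simp only [Nat.add_sub_cancel]
        rcases k with _ | k
        · push_cast; ring
        · simp only [Nat.add_sub_cancel]; push_cast; ring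
    · simp only [Nat.add_sub_cancel]
      rcases k with _ | k
      · push_cast; ring
      · simp only [Nat.add_sub_cancel]
        rcases k with _ | k
        · push_cast; ring
        · simp only [Nat.add_sub_cancel]; push_cast; ring

lemma jacobi_ode (n : ℕ) (α β : ℝ) (x : ℝ) :
    (1-x^2) * P2 n α β x + (β-α-(α+β+2)*x) * P1 n α β x
      + ((n:ℝ)*((n:ℝ)+α+β+1)) * jacobiP n α β x = 0 := by
  rw [jacobiP_eq]
  unfold P1 P2
  simp only
  rw [Finset.mul_sum, Finset.mul_sum, Finset.mul_sum, ← Finset.sum_add_distrib,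
    ← Finset.sum_add_distrib]
  have : ∀ m ∈ Finset.range (n+1),
      (1-x^2) * (cc n α β m * ((((n-m : ℕ):ℝ) * ggD (n-m-1) m x + (m:ℝ) * ggD (n-m) (m-1) x) / 2))
      + (β-α-(α+β+2)*x) * (cc n α β m * ggD (n-m) m x)
      + ((n:ℝ)*((n:ℝ)+α+β+1)) * (cc n α β m * gg (n-m) m x)
      = EE n α β x (m+1) - EE n α β x m := fun m hm =>
    step n α β x m (by simpa using Nat.lt_succ_iff.mp (Finset.mem_range.mp hm))
  rw [Finset.sum_congr rfl this, Finset.sum_range_sub (EE n α β x)]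
  simp only [EE]
  ring

noncomputable def uF (α β θ : ℝ) : ℝ :=
  (1 - Real.cos θ) ^ ((2*α+1)/4) * (1 + Real.cos θ) ^ ((2*β+1)/4)

noncomputable def GF (α β θ : ℝ) : ℝ :=
  (2*α+1)/4 * (1 - Real.cos θ)⁻¹ - (2*β+1)/4 * (1 + Real.cos θ)⁻¹

noncomputable def HF (α β θ : ℝ) : ℝ := Real.sin θ * GF α β θ

noncomputable def H1F (α β θ : ℝ) : ℝ :=
  Real.cos θ * GF α β θ - Real.sin θ^2 *
    ((2*α+1)/4 * ((1 - Real.cos θ)^2)⁻¹ + (2*β+1)/4 * ((1 + Real.cos θ)^2)⁻¹)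

lemma hasDerivAt_one_sub_cos (θ : ℝ) :
    HasDerivAt (fun θ => 1 - Real.cos θ) (Real.sin θ) θ := by
  exact ((Real.hasDerivAt_cos θ).const_sub 1).congr_deriv (neg_neg _)

lemma hasDerivAt_one_add_cos (θ : ℝ) :
    HasDerivAt (fun θ => 1 + Real.cos θ) (-Real.sin θ) θ := by
  exact (Real.hasDerivAt_cos θ).const_add 1

lemma hasDerivAt_uF (α β θ : ℝ) (h1 : 0 < 1 - Real.cos θ) (h2 : 0 < 1 + Real.cos θ) :
    HasDerivAt (uF α β) (uF α β θ * HF α β θ) θ := by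
  have hA := (hasDerivAt_one_sub_cos θ).rpow_const (p := (2*α+1)/4) (Or.inl h1.ne')
  have hB := (hasDerivAt_one_add_cos θ).rpow_const (p := (2*β+1)/4) (Or.inl h2.ne')
  have := hA.mul hB
  refine this.congr_deriv (Eq.symm ?_)
  unfold uF HF GF
  rw [Real.rpow_sub_one h1.ne', Real.rpow_sub_one h2.ne']
  field_simp
  ring

lemma hasDerivAt_HF (α β θ : ℝ) (h1 : 0 < 1 - Real.cos θ) (h2 : 0 < 1 + Real.cos θ) :
    HasDerivAt (HF α β) (H1F α β θ) θ := by
  have hA : HasDerivAt (fun θ => (1 - Real.cos θ)⁻¹)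
      (-Real.sin θ / (1 - Real.cos θ)^2) θ := (hasDerivAt_one_sub_cos θ).inv h1.ne'
  have hB : HasDerivAt (fun θ => (1 + Real.cos θ)⁻¹)
      (-(-Real.sin θ) / (1 + Real.cos θ)^2) θ := (hasDerivAt_one_add_cos θ).inv h2.ne'
  have hG : HasDerivAt (GF α β)
      ((2*α+1)/4 * (-Real.sin θ / (1 - Real.cos θ)^2)
        - (2*β+1)/4 * (-(-Real.sin θ) / (1 + Real.cos θ)^2)) θ :=
    (hA.const_mul _).sub (hB.const_mul _)
  have := (Real.hasDerivAt_sin θ).mul hG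
  refine this.congr_deriv (Eq.symm ?_)
  unfold H1F GF
  field_simp
  ring

noncomputable def FF (n : ℕ) (α β θ : ℝ) : ℝ := uF α β θ * jacobiP n α β (Real.cos θ)

noncomputable def F1F (n : ℕ) (α β θ : ℝ) : ℝ :=
  uF α β θ * (HF α β θ * jacobiP n α β (Real.cos θ) + P1 n α β (Real.cos θ) * (-Real.sin θ))

noncomputable def F2F (n : ℕ) (α β θ : ℝ) : ℝ :=
  uF α β θ * HF α β θ *
      (HF α β θ * jacobiP n α β (Real.cos θ) + P1 n α β (Real.cos θ) * (-Real.sin θ))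
    + uF α β θ * (H1F α β θ * jacobiP n α β (Real.cos θ)
        + HF α β θ * (P1 n α β (Real.cos θ) * (-Real.sin θ))
        + (P2 n α β (Real.cos θ) * (-Real.sin θ) * (-Real.sin θ)
            + P1 n α β (Real.cos θ) * (-Real.cos θ)))

lemma hasDerivAt_V (n : ℕ) (α β θ : ℝ) :
    HasDerivAt (fun θ => jacobiP n α β (Real.cos θ))
      (P1 n α β (Real.cos θ) * (-Real.sin θ)) θ :=
  (hasDerivAt_P n α β (Real.cos θ)).comp θ (Real.hasDerivAt_cos θ)

lemma hasDerivAt_V1 (n : ℕ) (α β θ : ℝ) :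
    HasDerivAt (fun θ => P1 n α β (Real.cos θ) * (-Real.sin θ))
      (P2 n α β (Real.cos θ) * (-Real.sin θ) * (-Real.sin θ)
        + P1 n α β (Real.cos θ) * (-Real.cos θ)) θ := by
  have h1 : HasDerivAt (fun θ => P1 n α β (Real.cos θ))
      (P2 n α β (Real.cos θ) * (-Real.sin θ)) θ :=
    (hasDerivAt_P1 n α β (Real.cos θ)).comp θ (Real.hasDerivAt_cos θ)
  have h2 : HasDerivAt (fun θ : ℝ => -Real.sin θ) (-Real.cos θ) θ :=
    (Real.hasDerivAt_sin θ).neg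
  exact h1.mul h2

lemma hasDerivAt_FF (n : ℕ) (α β θ : ℝ) (h1 : 0 < 1 - Real.cos θ) (h2 : 0 < 1 + Real.cos θ) :
    HasDerivAt (FF n α β) (F1F n α β θ) θ := by
  have := (hasDerivAt_uF α β θ h1 h2).mul (hasDerivAt_V n α β θ)
  refine this.congr_deriv (Eq.symm ?_)
  unfold F1F
  ring

lemma hasDerivAt_F1F (n : ℕ) (α β θ : ℝ) (h1 : 0 < 1 - Real.cos θ) (h2 : 0 < 1 + Real.cos θ) :
    HasDerivAt (F1F n α β) (F2F n α β θ) θ := by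
  have hin := ((hasDerivAt_HF α β θ h1 h2).mul (hasDerivAt_V n α β θ)).add
    (hasDerivAt_V1 n α β θ)
  have := (hasDerivAt_uF α β θ h1 h2).mul hin
  exact this

lemma key (n : ℕ) (α β θ : ℝ) (h1 : 0 < 1 - Real.cos θ) (h2 : 0 < 1 + Real.cos θ) :
    F2F n α β θ + ((2*(n:ℝ)+α+β+1)^2/4 - (α^2-1/4)/(2*(1-Real.cos θ))
      - (β^2-1/4)/(2*(1+Real.cos θ))) * FF n α β θ = 0 := by
  have hne1 : (1:ℝ) - Real.cos θ ≠ 0 := h1.ne'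
  have hne2 : (1:ℝ) + Real.cos θ ≠ 0 := h2.ne'
  have hS2 : Real.sin θ^2 = 1 - Real.cos θ^2 := Real.sin_sq θ
  have hODE := jacobi_ode n α β (Real.cos θ)
  have hPOLY : 4*(Real.sin θ)^2*(jacobiP n α β (Real.cos θ))*(((2*α+1)/4)*(1+Real.cos θ) - ((2*β+1)/4)*(1-Real.cos θ))^2 - 8*(Real.sin θ)^2*(P1 n α β (Real.cos θ))*(((2*α+1)/4)*(1+Real.cos θ) - ((2*β+1)/4)*(1-Real.cos θ))*(1-Real.cos θ)*(1+Real.cos θ) + 4*(Real.cos θ)*(jacobiP n α β (Real.cos θ))*(((2*α+1)/4)*(1+Real.cos θ) - ((2*β+1)/4)*(1-Real.cos θ))*(1-Real.cos θ)*(1+Real.cos θ) - 4*(Real.sin θ)^2*(jacobiP n α β (Real.cos θ))*(((2*α+1)/4)*(1+Real.cos θ)^2 + ((2*β+1)/4)*(1-Real.cos θ)^2) - 4*(Real.cos θ)*(P1 n α β (Real.cos θ))*(1-Real.cos θ)^2*(1+Real.cos θ)^2 + 4*(Real.sin θ)^2*(P2 n α β (Real.cos θ))*(1-Real.cos θ)^2*(1+Real.cos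 θ)^2 + (jacobiP n α β (Real.cos θ))*((2*(n:ℝ)+α+β+1)^2*(1-Real.cos θ)^2*(1+Real.cos θ)^2 - 2*(α^2-1/4)*(1-Real.cos θ)*(1+Real.cos θ)^2 - 2*(β^2-1/4)*(1-Real.cos θ)^2*(1+Real.cos θ)) = 0 := by
    linear_combination (4*(1-(Real.cos θ)^2)^2) * hODE + (4*(jacobiP n α β (Real.cos θ))*(((2*α+1)/4)*(1+Real.cos θ) - ((2*β+1)/4)*(1-Real.cos θ))^2 - 8*(P1 n α β (Real.cos θ))*(((2*α+1)/4)*(1+Real.cos θ) - ((2*β+1)/4)*(1-Real.cos θ))*(1-(Real.cos θ)^2) - 4*(jacobiP n α β (Real.cos θ))*(((2*α+1)/4)*(1+Real.cos θ)^2+((2*β+1)/4)*(1-Real.cos θ)^2) + 4*(P2 n α β (Real.cos θ))*(1-(Real.cos θ)^2)^2) * hS2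
  calc F2F n α β θ + ((2*(n:ℝ)+α+β+1)^2/4 - (α^2-1/4)/(2*(1-Real.cos θ))
      - (β^2-1/4)/(2*(1+Real.cos θ))) * FF n α β θ
      = uF α β θ * ((4*(Real.sin θ)^2*(jacobiP n α β (Real.cos θ))*(((2*α+1)/4)*(1+Real.cos θ) - ((2*β+1)/4)*(1-Real.cos θ))^2 - 8*(Real.sin θ)^2*(P1 n α β (Real.cos θ))*(((2*α+1)/4)*(1+Real.cos θ) - ((2*β+1)/4)*(1-Real.cos θ))*(1-Real.cos θ)*(1+Real.cos θ) + 4*(Real.cos θ)*(jacobiP n α β (Real.cos θ))*(((2*α+1)/4)*(1+Real.cos θ) - ((2*β+1)/4)*(1-Real.cos θ))*(1-Real.cos θ)*(1+Real.cos θ) - 4*(Real.sin θ)^2*(jacobiP n α β (Real.cos θ))*(((2*α+1)/4)*(1+Real.cos θ)^2 + ((2*β+1)/4)*(1-Real.cos θ)^2) - 4*(Real.cos θ)*(P1 n α β (Real.cos θ))*(1-Real.cos θ)^2*(1+Real.cos θ)^2 + 4*(Real.sin θ)^2*(P2 n α β (Real.cos θ))*(1-Real.cos θ)^2*(1+Real.cos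 θ)^2 + (jacobiP n α β (Real.cos θ))*((2*(n:ℝ)+α+β+1)^2*(1-Real.cos θ)^2*(1+Real.cos θ)^2 - 2*(α^2-1/4)*(1-Real.cos θ)*(1+Real.cos θ)^2 - 2*(β^2-1/4)*(1-Real.cos θ)^2*(1+Real.cos θ))) / (4*(1-Real.cos θ)^2*(1+Real.cos θ)^2)) := by
        unfold F2F FF HF H1F GF
        field_simp
        ring
    _ = 0 := by rw [hPOLY]; simp

end StmtAux


open StmtAux in
theorem stmt3 (n : ℕ) (α β : ℝ) (hα : -1 < α) (hβ : -1 < β)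
    (Y : ℝ → ℝ)
    (hY : ∀ θ ∈ Set.Ioo 0 Real.pi,
      Y θ = (1 - Real.cos θ) ^ ((2 * α + 1) / 4) * (1 + Real.cos θ) ^ ((2 * β + 1) / 4) *
        jacobiP n α β (Real.cos θ))
    (L : ℝ) (hL : L = 2 * n + α + β + 1)
    (Ω : ℝ → ℝ)
    (hΩ : ∀ θ ∈ Set.Ioo 0 Real.pi,
      Ω θ = L ^ 2 / 4 - (α ^ 2 - 1 / 4) / (2 * (1 - Real.cos θ))
        - (β ^ 2 - 1 / 4) / (2 * (1 + Real.cos θ))) :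
    (∀ θ ∈ Set.Ioo 0 Real.pi, DifferentiableAt ℝ Y θ ∧ DifferentiableAt ℝ (deriv Y) θ) ∧
    ∀ θ ∈ Set.Ioo 0 Real.pi, deriv (deriv Y) θ + Ω θ * Y θ = 0 := by
  have hIoo : IsOpen (Set.Ioo (0:ℝ) Real.pi) := isOpen_Ioo
  have facts : ∀ θ ∈ Set.Ioo (0:ℝ) Real.pi,
      0 < 1 - Real.cos θ ∧ 0 < 1 + Real.cos θ := by
    intro θ hθ
    have hs : 0 < Real.sin θ := Real.sin_pos_of_pos_of_lt_pi hθ.1 hθ.2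
    have h := Real.sin_sq_add_cos_sq θ
    have hc2 : Real.cos θ^2 < 1 := by nlinarith
    constructor <;> nlinarith [Real.cos_le_one θ, Real.neg_one_le_cos θ]
  have hYF : ∀ θ ∈ Set.Ioo (0:ℝ) Real.pi, Y =ᶠ[nhds θ] FF n α β := by
    intro θ hθ
    filter_upwards [hIoo.mem_nhds hθ] with t ht
    rw [hY t ht]
    simp only [FF, uF]
  have hdY : ∀ θ ∈ Set.Ioo (0:ℝ) Real.pi, deriv Y θ = F1F n α β θ := by
    intro θ hθ
    rw [(hYF θ hθ).deriv_eq]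
    exact (hasDerivAt_FF n α β θ (facts θ hθ).1 (facts θ hθ).2).deriv
  have hdYev : ∀ θ ∈ Set.Ioo (0:ℝ) Real.pi, deriv Y =ᶠ[nhds θ] F1F n α β := by
    intro θ hθ
    filter_upwards [hIoo.mem_nhds hθ] with t ht
    exact hdY t ht
  constructor
  · intro θ hθ
    constructor
    · exact ((hasDerivAt_FF n α β θ (facts θ hθ).1 (facts θ hθ).2).congr_of_eventuallyEq
        (hYF θ hθ)).differentiableAt
    · exact ((hasDerivAt_F1F n α β θ (facts θ hθ).1 (facts θ hθ).2).congr_of_eventuallyEq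
        (hdYev θ hθ)).differentiableAt
  · intro θ hθ
    have hdd : deriv (deriv Y) θ = F2F n α β θ := by
      rw [(hdYev θ hθ).deriv_eq]
      exact (hasDerivAt_F1F n α β θ (facts θ hθ).1 (facts θ hθ).2).deriv
    rw [hdd, hΩ θ hθ, hL, hY θ hθ]
    have hkey := key n α β θ (facts θ hθ).1 (facts θ hθ).2
    simp only [FF, uF] at hkey
    linear_combination hkey
end

section
/- Let n ≥ 1 be a natural number and α, β > −1 be real, and let Ω(θ) = L²/4 − (α² − 1/4)/(2(1 − cos θ)) − (β² − 1/4)/(2(1 + cos θ)) for θ ∈ (0,π), where L = 2n+α+β+1. Then: (i) if |α| > 1/2 and |β| > 1/2, Ω' has exactly one zero θ_c in (0,π) and Ω attains a strict global maximum on (0,π) at θ_c; (ii) if |α| < 1/2 and |β| < 1/2, Ω' has exactly one zero θ_c in (0,π) and Ω attains a strict global minimum on (0,π) at θ_c; (iii) if (1/4 − α²)(1/4 − β²) < 0, then Ω is strictly monotonic on (0,π). -/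
open Real Filter Set

-- cos bounds on (0, π)
lemma cosb {θ : ℝ} (hθ : θ ∈ Set.Ioo 0 Real.pi) : Real.cos θ ∈ Set.Ioo (-1 : ℝ) 1 := by
  constructor
  · have := Real.strictAntiOn_cos ⟨le_of_lt hθ.1, le_of_lt hθ.2⟩
      ⟨le_of_lt Real.pi_pos, le_refl _⟩ hθ.2
    simpa [Real.cos_pi] using this
  · have := Real.strictAntiOn_cos ⟨le_refl (0:ℝ), le_of_lt Real.pi_pos⟩
      ⟨le_of_lt hθ.1, le_of_lt hθ.2⟩ hθ.1
    simpa [Real.cos_zero] using this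

-- derivative formula
lemma hasDeriv_g (A B K : ℝ) (f : ℝ → ℝ)
    (hf : ∀ θ ∈ Set.Ioo 0 Real.pi,
      f θ = K - A / (2 * (1 - Real.cos θ)) - B / (2 * (1 + Real.cos θ)))
    {θ : ℝ} (hθ : θ ∈ Set.Ioo 0 Real.pi) :
    HasDerivAt f (Real.sin θ / 2 *
      (A / (1 - Real.cos θ) ^ 2 - B / (1 + Real.cos θ) ^ 2)) θ := by
  obtain ⟨hc1, hc2⟩ := cosb hθ
  have h1 : (2 * (1 - Real.cos θ)) ≠ 0 := by nlinarith
  have h2 : (2 * (1 + Real.cos θ)) ≠ 0 := by nlinarith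
  have d1 : HasDerivAt (fun x => 2 * (1 - Real.cos x)) (2 * Real.sin θ) θ := by
    simpa using ((Real.hasDerivAt_cos θ).const_sub 1).const_mul 2
  have d2 : HasDerivAt (fun x => 2 * (1 + Real.cos x)) (2 * -Real.sin θ) θ := by
    simpa using ((Real.hasDerivAt_cos θ).const_add 1).const_mul 2
  have q1 := (hasDerivAt_const θ A).div d1 h1
  have q2 := (hasDerivAt_const θ B).div d2 h2
  have q := ((hasDerivAt_const θ K).sub q1).sub q2
  have hg : HasDerivAt (fun x => K - A / (2 * (1 - Real.cos x)) - B / (2 * (1 + Real.cos x)))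
      (Real.sin θ / 2 * (A / (1 - Real.cos θ) ^ 2 - B / (1 + Real.cos θ) ^ 2)) θ := by
    refine q.congr_deriv ?_
    have e1 : (1 - Real.cos θ) ≠ 0 := by nlinarith
    have e2 : (1 + Real.cos θ) ≠ 0 := by nlinarith
    field_simp
    ring
  apply hg.congr_of_eventuallyEq
  filter_upwards [isOpen_Ioo.mem_nhds hθ] with x hx using hf x hx

-- monotone segment lemma
lemma seg (f f' : ℝ → ℝ)
    (hf : ∀ θ ∈ Set.Ioo 0 Real.pi, HasDerivAt f (f' θ) θ)
    {x y : ℝ} (hx : x ∈ Set.Ioo 0 Real.pi) (hy : y ∈ Set.Ioo 0 Real.pi) (hxy : x < y)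
    (hpos : ∀ θ ∈ Set.Ioo x y, 0 < f' θ) : f x < f y := by
  have hsub : Set.Icc x y ⊆ Set.Ioo 0 Real.pi := fun t ht =>
    ⟨lt_of_lt_of_le hx.1 ht.1, lt_of_le_of_lt ht.2 hy.2⟩
  have hcont : ContinuousOn f (Set.Icc x y) := fun t ht =>
    ((hf t (hsub ht)).continuousAt).continuousWithinAt
  have hmono : StrictMonoOn f (Set.Icc x y) := by
    apply strictMonoOn_of_deriv_pos (convex_Icc x y) hcont
    intro t ht
    rw [interior_Icc] at ht
    rw [(hf t (hsub (Set.Ioo_subset_Icc_self ht))).deriv]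
    exact hpos t ht
  exact hmono (Set.left_mem_Icc.2 hxy.le) (Set.right_mem_Icc.2 hxy.le) hxy

-- master lemma: A,B > 0 gives unique critical point which is a strict max
lemma master (A B K : ℝ) (hA : 0 < A) (hB : 0 < B) (f : ℝ → ℝ)
    (hf : ∀ θ ∈ Set.Ioo 0 Real.pi,
      f θ = K - A / (2 * (1 - Real.cos θ)) - B / (2 * (1 + Real.cos θ))) :
    ∃ θc ∈ Set.Ioo 0 Real.pi, deriv f θc = 0 ∧
      (∀ θ ∈ Set.Ioo 0 Real.pi, deriv f θ = 0 → θ = θc) ∧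
      ∀ θ ∈ Set.Ioo 0 Real.pi, θ ≠ θc → f θ < f θc := by
  set a := Real.sqrt A with ha_def
  set b := Real.sqrt B with hb_def
  have ha : 0 < a := Real.sqrt_pos.2 hA
  have hb : 0 < b := Real.sqrt_pos.2 hB
  have ha2 : a ^ 2 = A := Real.sq_sqrt hA.le
  have hb2 : b ^ 2 = B := Real.sq_sqrt hB.le
  set cc : ℝ := (b - a) / (a + b) with hcc_def
  have hab : 0 < a + b := by linarith
  have hcc1 : -1 < cc := by
    rw [hcc_def, lt_div_iff₀ hab]; linarith
  have hcc2 : cc < 1 := by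
    rw [hcc_def, div_lt_one hab]; linarith
  set θc := Real.arccos cc with hθc_def
  have hθcmem : θc ∈ Set.Ioo 0 Real.pi := by
    constructor
    · exact Real.arccos_pos.2 hcc2
    · exact lt_of_le_of_ne (Real.arccos_le_pi cc)
        (fun h => absurd (Real.arccos_eq_pi.1 h) (by linarith))
  have hcosθc : Real.cos θc = cc := Real.cos_arccos hcc1.le hcc2.le
  set D : ℝ → ℝ := fun θ => Real.sin θ / 2 *
      (A / (1 - Real.cos θ) ^ 2 - B / (1 + Real.cos θ) ^ 2) with hD_def
  have hD : ∀ θ ∈ Set.Ioo 0 Real.pi, HasDerivAt f (D θ) θ :=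
    fun θ hθ => hasDeriv_g A B K f hf hθ
  -- sign of D
  have hsign : ∀ θ ∈ Set.Ioo 0 Real.pi,
      D θ = Real.sin θ / 2 * ((a + b) * (Real.cos θ - cc) *
        (a * (1 + Real.cos θ) + b * (1 - Real.cos θ))) /
        ((1 - Real.cos θ) ^ 2 * (1 + Real.cos θ) ^ 2) := by
    intro θ hθ
    obtain ⟨hc1, hc2⟩ := cosb hθ
    have e1 : (1 - Real.cos θ) ≠ 0 := by nlinarith
    have e2 : (1 + Real.cos θ) ≠ 0 := by nlinarith
    rw [hD_def]
    simp only
    rw [← ha2, ← hb2, hcc_def]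
    field_simp
    ring
  -- key positivity / negativity facts
  have hDpos : ∀ θ ∈ Set.Ioo 0 Real.pi, θ < θc → 0 < D θ := by
    intro θ hθ hlt
    obtain ⟨hc1, hc2⟩ := cosb hθ
    have hsin : 0 < Real.sin θ := Real.sin_pos_of_pos_of_lt_pi hθ.1 hθ.2
    have hcgt : cc < Real.cos θ := by
      have := Real.strictAntiOn_cos ⟨hθ.1.le, hθ.2.le⟩ ⟨hθcmem.1.le, hθcmem.2.le⟩ hlt
      rwa [hcosθc] at this
    rw [hsign θ hθ]
    have hP : 0 < a * (1 + Real.cos θ) + b * (1 - Real.cos θ) := by nlinarith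
    have hden : 0 < (1 - Real.cos θ) ^ 2 * (1 + Real.cos θ) ^ 2 :=
      mul_pos (pow_pos (by linarith) 2) (pow_pos (by linarith) 2)
    have h3 : 0 < Real.cos θ - cc := by linarith
    exact div_pos (mul_pos (by linarith) (mul_pos (mul_pos hab h3) hP)) hden
  have hDneg : ∀ θ ∈ Set.Ioo 0 Real.pi, θc < θ → D θ < 0 := by
    intro θ hθ hlt
    obtain ⟨hc1, hc2⟩ := cosb hθ
    have hsin : 0 < Real.sin θ := Real.sin_pos_of_pos_of_lt_pi hθ.1 hθ.2
    have hclt : Real.cos θ < cc := by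
      have := Real.strictAntiOn_cos ⟨hθcmem.1.le, hθcmem.2.le⟩ ⟨hθ.1.le, hθ.2.le⟩ hlt
      rwa [hcosθc] at this
    rw [hsign θ hθ]
    have hP : 0 < a * (1 + Real.cos θ) + b * (1 - Real.cos θ) := by nlinarith
    have hden : 0 < (1 - Real.cos θ) ^ 2 * (1 + Real.cos θ) ^ 2 :=
      mul_pos (pow_pos (by linarith) 2) (pow_pos (by linarith) 2)
    have h3 : Real.cos θ - cc < 0 := by linarith
    exact div_neg_of_neg_of_pos
      (mul_neg_of_pos_of_neg (by linarith)
        (mul_neg_of_neg_of_pos (mul_neg_of_pos_of_neg hab h3) hP)) hden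
  refine ⟨θc, hθcmem, ?_, ?_, ?_⟩
  · rw [(hD θc hθcmem).deriv, hsign θc hθcmem, hcosθc]
    simp
  · intro θ hθ hd0
    rw [(hD θ hθ).deriv] at hd0
    by_contra hne
    rcases lt_or_gt_of_ne hne with h | h
    · exact absurd hd0 (ne_of_gt (hDpos θ hθ h))
    · exact absurd hd0 (ne_of_lt (hDneg θ hθ h))
  · intro θ hθ hne
    rcases lt_or_gt_of_ne hne with h | h
    · exact seg f D hD hθ hθcmem h (fun t ht => hDpos t
        ⟨lt_trans hθ.1 ht.1, lt_trans ht.2 hθcmem.2⟩ ht.2)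
    · have := seg (fun x => -f x) (fun x => -D x)
        (fun t ht => (hD t ht).neg) hθcmem hθ h
        (fun t ht => by
          have := hDneg t ⟨lt_trans hθcmem.1 ht.1, lt_trans ht.2 hθ.2⟩ ht.1
          show (0:ℝ) < -D t
          linarith)
      simpa using this

-- master lemma 2: A > 0, B < 0 gives strict monotone
lemma master2 (A B K : ℝ) (hA : 0 < A) (hB : B < 0) (f : ℝ → ℝ)
    (hf : ∀ θ ∈ Set.Ioo 0 Real.pi,
      f θ = K - A / (2 * (1 - Real.cos θ)) - B / (2 * (1 + Real.cos θ))) :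
    StrictMonoOn f (Set.Ioo 0 Real.pi) := by
  intro x hx y hy hxy
  apply seg f (fun θ => Real.sin θ / 2 *
      (A / (1 - Real.cos θ) ^ 2 - B / (1 + Real.cos θ) ^ 2))
    (fun θ hθ => hasDeriv_g A B K f hf hθ) hx hy hxy
  intro t ht
  have htm : t ∈ Set.Ioo 0 Real.pi := ⟨lt_trans hx.1 ht.1, lt_trans ht.2 hy.2⟩
  obtain ⟨hc1, hc2⟩ := cosb htm
  have hsin : 0 < Real.sin t := Real.sin_pos_of_pos_of_lt_pi htm.1 htm.2
  have h1 : 0 < A / (1 - Real.cos t) ^ 2 := div_pos hA (by nlinarith)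
  have h2 : B / (1 + Real.cos t) ^ 2 < 0 :=
    div_neg_of_neg_of_pos hB (by nlinarith)
  exact mul_pos (by linarith) (by linarith)

theorem stmt6 (n : ℕ) (hn : 1 ≤ n) (α β : ℝ) (hα : -1 < α) (hβ : -1 < β)
    (L : ℝ) (hL : L = 2 * n + α + β + 1)
    (Ω : ℝ → ℝ)
    (hΩ : ∀ θ ∈ Set.Ioo 0 Real.pi,
      Ω θ = L ^ 2 / 4 - (α ^ 2 - 1 / 4) / (2 * (1 - Real.cos θ))
        - (β ^ 2 - 1 / 4) / (2 * (1 + Real.cos θ))) :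
    (1 / 2 < |α| → 1 / 2 < |β| →
      ∃ θc ∈ Set.Ioo 0 Real.pi, deriv Ω θc = 0 ∧
        (∀ θ ∈ Set.Ioo 0 Real.pi, deriv Ω θ = 0 → θ = θc) ∧
        ∀ θ ∈ Set.Ioo 0 Real.pi, θ ≠ θc → Ω θ < Ω θc) ∧
    (|α| < 1 / 2 → |β| < 1 / 2 →
      ∃ θc ∈ Set.Ioo 0 Real.pi, deriv Ω θc = 0 ∧
        (∀ θ ∈ Set.Ioo 0 Real.pi, deriv Ω θ = 0 → θ = θc) ∧
        ∀ θ ∈ Set.Ioo 0 Real.pi, θ ≠ θc → Ω θc < Ω θ) ∧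
    ((1 / 4 - α ^ 2) * (1 / 4 - β ^ 2) < 0 →
      StrictMonoOn Ω (Set.Ioo 0 Real.pi) ∨ StrictAntiOn Ω (Set.Ioo 0 Real.pi)) := by
  have habs1 : ∀ x : ℝ, 1/2 < |x| → 1/4 < x^2 := fun x h => by
    nlinarith [sq_abs x, abs_nonneg x]
  have habs2 : ∀ x : ℝ, |x| < 1/2 → x^2 < 1/4 := fun x h => by
    nlinarith [sq_abs x, abs_nonneg x]
  refine ⟨?_, ?_, ?_⟩
  · intro h1 h2
    exact master (α^2 - 1/4) (β^2 - 1/4) (L^2/4)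
      (by have := habs1 α h1; linarith)
      (by have := habs1 β h2; linarith) Ω hΩ
  · intro h1 h2
    obtain ⟨θc, hθc, hd, hu, hmax⟩ := master (1/4 - α^2) (1/4 - β^2) (-(L^2/4))
      (by have := habs2 α h1; linarith)
      (by have := habs2 β h2; linarith) (fun θ => -Ω θ)
      (by intro θ hθ; show -Ω θ = _; rw [hΩ θ hθ]; ring)
    refine ⟨θc, hθc, ?_, ?_, ?_⟩
    · have : deriv (fun θ => -Ω θ) θc = -deriv Ω θc := deriv.neg
      rw [this] at hd; linarith
    · intro θ hθ h0
      apply hu θ hθ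
      rw [deriv.fun_neg, h0, neg_zero]
    · intro θ hθ hne
      have := hmax θ hθ hne
      simpa using this
  · intro hprod
    rcases mul_neg_iff.1 hprod with ⟨h1, h2⟩ | ⟨h1, h2⟩
    · -- 1/4 - α² > 0, 1/4 - β² < 0 : A = α²-1/4 < 0, B = β²-1/4 > 0 : anti
      right
      have hmono : StrictMonoOn (fun θ => -Ω θ) (Set.Ioo 0 Real.pi) :=
        master2 (1/4 - α^2) (1/4 - β^2) (-(L^2/4)) h1 h2 (fun θ => -Ω θ)
          (by intro θ hθ; show -Ω θ = _; rw [hΩ θ hθ]; ring)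
      intro x hx y hy hxy
      have := hmono hx hy hxy
      simpa using this
    · left
      exact master2 (α^2 - 1/4) (β^2 - 1/4) (L^2/4) (by linarith) (by linarith) Ω hΩ
end

section
/- Let n ∈ ℕ and α, β be real. Then for all real x: (n+α+β+1)(1−x)·P_n^{(α+1,β)}(x) − [(2n+α+β+1)(1−x) + 2α]·P_n^{(α,β)}(x) + 2(α+n)·P_n^{(α−1,β)}(x) = 0. -/
open Real Filter Set

lemma genBinom_zero (t : ℝ) : genBinom t 0 = 1 := by simp [genBinom]

lemma genBinom_succ_mul (t : ℝ) (m : ℕ) :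
    ((m : ℝ) + 1) * genBinom t (m + 1) = (t - m) * genBinom t m := by
  have hf : (Nat.factorial m : ℝ) ≠ 0 := Nat.cast_ne_zero.mpr (Nat.factorial_ne_zero m)
  unfold genBinom
  rw [Finset.prod_range_succ, Nat.factorial_succ]
  push_cast
  field_simp

lemma genBinom_pascal (t : ℝ) (m : ℕ) :
    genBinom (t + 1) (m + 1) = genBinom t (m + 1) + genBinom t m := by
  have hf : (Nat.factorial m : ℝ) ≠ 0 := Nat.cast_ne_zero.mpr (Nat.factorial_ne_zero m)
  have h : (∏ i ∈ Finset.range (m + 1), (t + 1 - (i : ℕ))) =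
      (∏ i ∈ Finset.range m, (t - (i : ℕ))) * (t + 1) := by
    rw [Finset.prod_range_succ']
    congr 1
    · exact Finset.prod_congr rfl (fun i _ => by push_cast; ring)
    · push_cast; ring
  unfold genBinom
  rw [h, Finset.prod_range_succ, Nat.factorial_succ]
  push_cast
  field_simp
  ring

lemma genBinom_shift (t : ℝ) (m : ℕ) :
    (t + 1) * genBinom t m = (t + 1 - m) * genBinom (t + 1) m := by
  have h1 := Finset.prod_range_succ (fun i => t + 1 - (i : ℕ)) m
  have h2 := Finset.prod_range_succ' (fun i => t + 1 - (i : ℕ)) m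
  have h3 : (∏ i ∈ Finset.range m, (t + 1 - ((i : ℕ) + 1 : ℕ))) =
      ∏ i ∈ Finset.range m, (t - (i : ℕ)) :=
    Finset.prod_congr rfl (fun i _ => by push_cast; ring)
  have hf : (Nat.factorial m : ℝ) ≠ 0 := Nat.cast_ne_zero.mpr (Nat.factorial_ne_zero m)
  rw [h3] at h2
  push_cast at h2
  have h4 := h1.symm.trans h2
  unfold genBinom
  field_simp
  linear_combination -h4

lemma genBinom_iii (t : ℝ) (m : ℕ) :
    (m : ℝ) * genBinom t m = (t + 1 - m) * (genBinom (t + 1) m - genBinom t m) := by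
  cases m with
  | zero => simp [genBinom_zero]
  | succ k =>
    rw [genBinom_pascal]
    push_cast
    linear_combination genBinom_succ_mul t k

/-- Summand of the telescoping identity. -/
noncomputable def Tm (n : ℕ) (α β x : ℝ) (m : ℕ) : ℝ :=
  genBinom ((n : ℝ) + β) (n - m) *
    (((n : ℝ) * genBinom ((n : ℝ) + α) m -
        ((n : ℝ) + α + β + 1) * (genBinom ((n : ℝ) + α + 1) m - genBinom ((n : ℝ) + α) m)) *
      ((x - 1) / 2) * ((x - 1) / 2) ^ (n - m) * ((x + 1) / 2) ^ m +
     ((n : ℝ) - (m : ℝ)) * genBinom ((n : ℝ) + α) m *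
      ((x - 1) / 2) ^ (n - m) * ((x + 1) / 2) ^ m)

/-- Telescoping function. -/
noncomputable def Fm (n : ℕ) (α β x : ℝ) (m : ℕ) : ℝ :=
  (β + (m : ℝ)) * genBinom ((n : ℝ) + β) (n - m) *
    (genBinom ((n : ℝ) + α + 1) m - genBinom ((n : ℝ) + α) m) *
    ((x - 1) / 2) ^ (n - m) * ((x - 1) / 2) * ((x + 1) / 2) ^ m

lemma tele (n : ℕ) (α β x : ℝ) (m : ℕ) (hm : m < n) :
    Tm n α β x m = Fm n α β x (m + 1) - Fm n α β x m := by
  have hk : n - m = (n - (m + 1)) + 1 := by omega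
  have hcast : ((n - (m + 1) : ℕ) : ℝ) = (n : ℝ) - (m : ℝ) - 1 := by
    have : ((n - (m + 1) : ℕ) : ℝ) = (n : ℝ) - ((m + 1 : ℕ) : ℝ) := by
      exact_mod_cast Nat.cast_sub (by omega)
    rw [this]; push_cast; ring
  have h2 := genBinom_succ_mul ((n : ℝ) + β) (n - (m + 1))
  rw [hcast] at h2
  have h3 := genBinom_iii ((n : ℝ) + α) m
  unfold Tm Fm
  rw [hk, genBinom_pascal]
  push_cast
  linear_combination
    (genBinom ((n : ℝ) + α) m * ((x - 1) / 2) ^ (n - (m + 1)) * ((x - 1) / 2) *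
      ((x + 1) / 2) ^ m * ((x + 1) / 2)) * h2 +
    (genBinom ((n : ℝ) + β) ((n - (m + 1)) + 1) * ((x - 1) / 2) ^ (n - (m + 1)) *
      ((x - 1) / 2) * ((x - 1) / 2) * ((x + 1) / 2) ^ m) * h3

lemma lastTerm (n : ℕ) (α β x : ℝ) :
    Fm n α β x n + Tm n α β x n = 0 := by
  have h3 := genBinom_iii ((n : ℝ) + α) n
  unfold Tm Fm
  rw [Nat.sub_self]
  simp only [genBinom_zero, pow_zero]
  linear_combination ((x - 1) / 2) * ((x + 1) / 2) ^ n * h3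

lemma Fm_zero (n : ℕ) (α β x : ℝ) : Fm n α β x 0 = 0 := by
  simp [Fm, genBinom_zero]

theorem stmt8 (n : ℕ) (α β : ℝ) (x : ℝ) :
    ((n : ℝ) + α + β + 1) * (1 - x) * jacobiP n (α + 1) β x
      - (((2 * n : ℝ) + α + β + 1) * (1 - x) + 2 * α) * jacobiP n α β x
      + 2 * (α + n) * jacobiP n (α - 1) β x = 0 := by
  have key : ∀ m ∈ Finset.range (n + 1),
      ((n : ℝ) + α + β + 1) * (1 - x) *
          (genBinom ((n : ℝ) + (α + 1)) m * genBinom ((n : ℝ) + β) (n - m) *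
            ((x - 1) / 2) ^ (n - m) * ((x + 1) / 2) ^ m)
        - (((2 * n : ℝ) + α + β + 1) * (1 - x) + 2 * α) *
          (genBinom ((n : ℝ) + α) m * genBinom ((n : ℝ) + β) (n - m) *
            ((x - 1) / 2) ^ (n - m) * ((x + 1) / 2) ^ m)
        + 2 * (α + (n : ℝ)) *
          (genBinom ((n : ℝ) + (α - 1)) m * genBinom ((n : ℝ) + β) (n - m) *
            ((x - 1) / 2) ^ (n - m) * ((x + 1) / 2) ^ m)
        = 2 * Tm n α β x m := by
    intro m _
    have e1 : (n : ℝ) + (α + 1) = (n : ℝ) + α + 1 := by ring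
    have e2 : (n : ℝ) + (α - 1) = (n : ℝ) + α - 1 := by ring
    have hL2 := genBinom_shift ((n : ℝ) + α - 1) m
    rw [show (n : ℝ) + α - 1 + 1 = (n : ℝ) + α by ring] at hL2
    rw [e1, e2]
    unfold Tm
    linear_combination (2 * genBinom ((n : ℝ) + β) (n - m) * ((x - 1) / 2) ^ (n - m) *
      ((x + 1) / 2) ^ m) * hL2
  have hsum : ∑ m ∈ Finset.range (n + 1), Tm n α β x m = 0 := by
    rw [Finset.sum_range_succ]
    have htel : ∑ m ∈ Finset.range n, Tm n α β x m = Fm n α β x n - Fm n α β x 0 := by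
      rw [← Finset.sum_range_sub (Fm n α β x)]
      exact Finset.sum_congr rfl (fun m hm => tele n α β x m (Finset.mem_range.mp hm))
    rw [htel, Fm_zero]
    have := lastTerm n α β x
    linarith
  simp only [jacobiP]
  rw [Finset.mul_sum, Finset.mul_sum, Finset.mul_sum, ← Finset.sum_sub_distrib,
    ← Finset.sum_add_distrib, Finset.sum_congr rfl key, ← Finset.mul_sum, hsum, mul_zero]
end

section
/- Let n ∈ ℕ and α, β be real. Then for all real x: (1−x²)·(d/dx)P_n^{(α,β)}(x) = (n(1−x) + 2α)·P_n^{(α,β)}(x) − 2(α+n)·P_n^{(α−1,β)}(x). -/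
open Real Filter Set

lemma key (t : ℝ) (m : ℕ) :
    t * ∏ i ∈ Finset.range m, (t - 1 - (i:ℝ)) = (t - m) * ∏ i ∈ Finset.range m, (t - (i:ℝ)) := by
  have h1 := Finset.prod_range_succ' (fun i : ℕ => t - (i:ℝ)) m
  have h2 := Finset.prod_range_succ (fun i : ℕ => t - (i:ℝ)) m
  simp only [Nat.cast_add, Nat.cast_one, Nat.cast_zero, sub_zero] at h1 h2
  have h3 : (∏ i ∈ Finset.range m, (t - ((i:ℝ)+1))) = ∏ i ∈ Finset.range m, (t - 1 - (i:ℝ)) := by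
    apply Finset.prod_congr rfl; intros; ring
  rw [h3] at h1
  rw [mul_comm, ← h1, h2, mul_comm]

lemma genBinom_key (α : ℝ) (n m : ℕ) :
    (α + n) * genBinom (n + α - 1) m = (α + n - m) * genBinom (n + α) m := by
  have h := key ((n : ℝ) + α) m
  have hf : (Nat.factorial m : ℝ) ≠ 0 := by positivity
  unfold genBinom
  field_simp
  linear_combination h

lemma jacobi_hasDerivAt (n : ℕ) (α β x : ℝ) :
    HasDerivAt (fun t => jacobiP n α β t)
      (∑ m ∈ Finset.range (n + 1),
        genBinom (n + α) m * genBinom (n + β) (n - m) *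
          (((n - m : ℕ) : ℝ) * ((x - 1) / 2) ^ (n - m - 1) * (1/2) * ((x + 1) / 2) ^ m
            + ((x - 1) / 2) ^ (n - m) * ((m : ℝ) * ((x + 1) / 2) ^ (m - 1) * (1/2)))) x := by
  unfold jacobiP
  apply HasDerivAt.fun_sum
  intro m hm
  have hs : HasDerivAt (fun x : ℝ => (x - 1) / 2) (1/2) x := by
    simpa using ((hasDerivAt_id x).sub_const 1).div_const 2
  have ht : HasDerivAt (fun x : ℝ => (x + 1) / 2) (1/2) x := by
    simpa using ((hasDerivAt_id x).add_const 1).div_const 2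
  have h1 := ((hs.fun_pow (n - m)).const_mul (genBinom (n + α) m * genBinom (n + β) (n - m))).fun_mul (ht.fun_pow m)
  convert h1 using 1
  · rfl
  ring

theorem stmt9 (n : ℕ) (α β : ℝ) (x : ℝ) :
    (1 - x ^ 2) * deriv (fun t => jacobiP n α β t) x
      = ((n : ℝ) * (1 - x) + 2 * α) * jacobiP n α β x
        - 2 * (α + n) * jacobiP n (α - 1) β x := by
  rw [(jacobi_hasDerivAt n α β x).deriv]
  unfold jacobiP
  rw [Finset.mul_sum, Finset.mul_sum, Finset.mul_sum, ← Finset.sum_sub_distrib]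
  apply Finset.sum_congr rfl
  intro m hm
  have hm' : m ≤ n := Nat.lt_succ_iff.mp (Finset.mem_range.mp hm)
  obtain ⟨k, hk⟩ : ∃ k, n = m + k := ⟨n - m, (Nat.add_sub_cancel' hm').symm⟩
  subst hk
  have hnm : m + k - m = k := by omega
  rw [hnm]
  have hkey := genBinom_key α (m + k) m
  have hα : ((m+k : ℕ):ℝ) + (α - 1) = ((m+k:ℕ):ℝ) + α - 1 := by ring
  rw [hα]
  push_cast at hkey ⊢

  set A := genBinom (↑m + ↑k + α) m with hA
  set B := genBinom (↑m + ↑k + β) k with hB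
  set A2 := genBinom (↑m + ↑k + α - 1) m with hA2
  rcases k with _ | k <;> rcases m with _ | m <;>
      simp only [Nat.cast_zero, Nat.cast_add, Nat.cast_one, Nat.add_sub_cancel, Nat.sub_self,
        Nat.zero_sub, pow_zero] at hkey ⊢
  · linear_combination (2 * B) * hkey
  · linear_combination (2 * B * ((x + 1) / 2) ^ (m + 1)) * hkey
  · linear_combination (2 * B * ((x - 1) / 2) ^ (k + 1)) * hkey
  · linear_combination (2 * B * ((x - 1) / 2) ^ (k + 1) * ((x + 1) / 2) ^ (m + 1)) * hkey
end

section
/- Let n ≥ 1 be a natural number and α, β > −1 be real, let L = 2n+α+β+1, and let Ỹ(x) = (1−x)^((α+1)/2)·(1+x)^((β+1)/2)·P_n^{(α,β)}(x) on (−1,1). Then for every x ∈ (−1,1) with P_n^{(α,β)}(x) ≠ 0: Ỹ'(x)/Ỹ(x) = (n+β+1)/(2(1+x)) − (n+α+1)/(2(1−x)) + [ n(α−β) + 2(n+α)(n+β)·P_{n−1}^{(α,β)}(x)/P_n^{(α,β)}(x) ] / ((L−1)(1−x²)). -/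
open Real Filter Set

lemma genBinom_absorb (t : ℝ) (k : ℕ) :
    ((k : ℝ) + 1) * genBinom t (k + 1) = (t - k) * genBinom t k := by
  simp only [genBinom, Finset.prod_range_succ, Nat.factorial_succ]
  push_cast
  have h1 : (k.factorial : ℝ) ≠ 0 := by positivity
  field_simp

lemma genBinom_absorb' (t : ℝ) (k : ℕ) :
    ((k : ℝ) + 1) * genBinom (t + 1) (k + 1) = (t + 1) * genBinom t k := by
  have : ∀ i ∈ Finset.range (k+1), True := fun _ _ => trivial
  simp only [genBinom, Nat.factorial_succ]
  rw [Finset.prod_range_succ']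
  push_cast
  have h1 : (k.factorial : ℝ) ≠ 0 := by positivity
  have h2 : (∏ i ∈ Finset.range k, (t + 1 - ((i:ℝ) + 1))) = ∏ i ∈ Finset.range k, (t - i) := by
    apply Finset.prod_congr rfl; intro i _; ring
  rw [h2]
  field_simp
  ring

lemma genBinom_vandermonde (s t : ℝ) (k : ℕ) :
    ∑ j ∈ Finset.range (k + 1), genBinom s j * genBinom t (k - j) = genBinom (s + t) k := by
  induction k with
  | zero => simp [genBinom_zero]
  | succ k ih =>
    have hk1 : ((k : ℝ) + 1) ≠ 0 := by positivity
    have key : ((k : ℝ) + 1) * ∑ j ∈ Finset.range (k + 2), genBinom s j * genBinom t (k + 1 - j)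
        = (s + t - k) * genBinom (s + t) k := by
      rw [Finset.mul_sum]
      have split : ∀ j ∈ Finset.range (k + 2),
          ((k : ℝ) + 1) * (genBinom s j * genBinom t (k + 1 - j))
          = (j : ℝ) * genBinom s j * genBinom t (k + 1 - j)
            + genBinom s j * (((k + 1 - j : ℕ) : ℝ) * genBinom t (k + 1 - j)) := by
        intro j hj
        simp only [Finset.mem_range] at hj
        have : ((k + 1 - j : ℕ) : ℝ) = (k : ℝ) + 1 - j := by
          have : j ≤ k + 1 := by omega
          push_cast [Nat.cast_sub this]; ring
        rw [this]; ring
      rw [Finset.sum_congr rfl split, Finset.sum_add_distrib]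
      -- first sum: reindex j = i+1
      have hA : ∑ j ∈ Finset.range (k + 2), (j : ℝ) * genBinom s j * genBinom t (k + 1 - j)
          = ∑ i ∈ Finset.range (k + 1), (s - i) * genBinom s i * genBinom t (k - i) := by
        rw [Finset.sum_range_succ'] -- ∑_{j∈range(k+2)} f j = ∑_{i∈range(k+1)} f (i+1) + f 0
        simp only [Nat.cast_zero, zero_mul]
        rw [add_zero]
        apply Finset.sum_congr rfl
        intro i hi
        simp only [Finset.mem_range] at hi
        have h1 : k + 1 - (i + 1) = k - i := by omega
        rw [h1]
        push_cast
        linear_combination genBinom t (k - i) * genBinom_absorb s i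
      -- second sum: last term zero
      have hB : ∑ j ∈ Finset.range (k + 2), genBinom s j * (((k + 1 - j : ℕ) : ℝ) * genBinom t (k + 1 - j))
          = ∑ j ∈ Finset.range (k + 1), genBinom s j * ((t - (k - j : ℕ)) * genBinom t (k - j)) := by
        rw [Finset.sum_range_succ]
        simp only [Nat.sub_self, Nat.cast_zero, zero_mul, mul_zero, add_zero]
        apply Finset.sum_congr rfl
        intro j hj
        simp only [Finset.mem_range] at hj
        have h1 : k + 1 - j = (k - j) + 1 := by omega
        rw [h1]
        congr 1
        push_cast
        exact genBinom_absorb t (k - j)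
      rw [hA, hB, ← ih, Finset.mul_sum, ← Finset.sum_add_distrib]
      apply Finset.sum_congr rfl
      intro j hj
      simp only [Finset.mem_range] at hj
      have : ((k - j : ℕ) : ℝ) = (k : ℝ) - j := by
        have : j ≤ k := by omega
        push_cast [Nat.cast_sub this]; ring
      rw [this]; ring
    have h2 := genBinom_absorb (s + t) k
    have : ((k:ℝ)+1) * ∑ j ∈ Finset.range (k + 2), genBinom s j * genBinom t (k + 1 - j)
        = ((k:ℝ)+1) * genBinom (s+t) (k+1) := by rw [key, h2]
    exact mul_left_cancel₀ hk1 this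

lemma genBinom_subset (t : ℝ) (m r : ℕ) (h : r ≤ m) :
    genBinom t m * (m.choose r : ℝ) = genBinom t r * genBinom (t - r) (m - r) := by
  simp only [genBinom]
  have hsplit : (∏ i ∈ Finset.range m, (t - i))
      = (∏ i ∈ Finset.range r, (t - i)) * ∏ i ∈ Finset.range (m - r), (t - r - i) := by
    have hm : m = r + (m - r) := by omega
    calc ∏ i ∈ Finset.range m, (t - i) = ∏ i ∈ Finset.range (r + (m - r)), (t - i) := by rw [← hm]
      _ = _ := by
          rw [Finset.prod_range_add]
          congr 1
          apply Finset.prod_congr rfl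
          intro i _
          push_cast
          ring
  have hfac : (m.choose r : ℝ) * (r.factorial : ℝ) * ((m - r).factorial : ℝ) = m.factorial := by
    exact_mod_cast congrArg (Nat.cast (R := ℝ)) (Nat.choose_mul_factorial_mul_factorial h)
  have h1 : (m.factorial : ℝ) ≠ 0 := by positivity
  have h2 : (r.factorial : ℝ) ≠ 0 := by positivity
  have h3 : ((m - r).factorial : ℝ) ≠ 0 := by positivity
  field_simp
  rw [hsplit]
  linear_combination (∏ i ∈ Finset.range r, (t - (i:ℝ))) * (∏ i ∈ Finset.range (m - r), (t - (r:ℝ) - (i:ℝ))) * hfac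

/-- Single-sum form of the Jacobi polynomial. -/
lemma jacobiP_eq_sum (n : ℕ) (α β : ℝ) (x : ℝ) :
    jacobiP n α β x = ∑ k ∈ Finset.range (n + 1),
      genBinom ((n : ℝ) + α) (n - k) * genBinom ((n : ℝ) + α + β + k) k * ((x - 1) / 2) ^ k := by
  set t : ℝ := (x - 1) / 2 with ht
  have htv : (x + 1) / 2 = t + 1 := by rw [ht]; ring
  -- RHS expansion
  have hrhs : ∀ k ∈ Finset.range (n+1),
      genBinom ((n : ℝ) + α) (n - k) * genBinom ((n : ℝ) + α + β + k) k * t ^ k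
      = ∑ j ∈ Finset.range (k + 1),
          genBinom ((n:ℝ) + α) (n - j) * genBinom ((n:ℝ) + β) j * ((n - j).choose (k - j) : ℝ) * t ^ k := by
    intro k hk
    simp only [Finset.mem_range] at hk
    have hkn : k ≤ n := by omega
    have hv : genBinom ((n : ℝ) + α + β + k) k
        = ∑ j ∈ Finset.range (k + 1), genBinom ((n:ℝ) + β) j * genBinom (α + k) (k - j) := by
      rw [genBinom_vandermonde]
      ring_nf
    rw [hv, Finset.mul_sum, Finset.sum_mul]
    apply Finset.sum_congr rfl
    intro j hj
    simp only [Finset.mem_range] at hj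
    have hjk : j ≤ k := by omega
    -- subset identity with t = n+α, m = n-j, r = n-k
    have hsub := genBinom_subset ((n:ℝ) + α) (n - j) (n - k) (by omega)
    have hc1 : ((n:ℝ) + α - ((n - k : ℕ) : ℝ)) = α + k := by
      push_cast [Nat.cast_sub hkn]; ring
    have hc2 : (n - j) - (n - k) = k - j := by omega
    have hc3 : (n - j).choose (n - k) = (n - j).choose (k - j) := by
      rw [show n - k = (n - j) - (k - j) by omega, Nat.choose_symm (by omega)]
    rw [hc1, hc2, hc3] at hsub
    linear_combination (- t ^ k * genBinom ((n:ℝ) + β) j) * hsub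
  rw [Finset.sum_congr rfl hrhs]
  -- LHS expansion via add_pow
  have hlhs : jacobiP n α β x = ∑ m ∈ Finset.range (n + 1), ∑ r ∈ Finset.range (m + 1),
      genBinom ((n:ℝ) + α) m * genBinom ((n:ℝ) + β) (n - m) * (m.choose r : ℝ) * t ^ (n - m + r) := by
    unfold jacobiP
    apply Finset.sum_congr rfl
    intro m hm
    rw [htv, add_pow]
    rw [Finset.mul_sum]
    apply Finset.sum_congr rfl
    intro r hr
    simp only [one_pow, ← ht]
    rw [pow_add]
    push_cast
    ring
  rw [hlhs]
  -- reindex: (m, r) ↦ (k, j) = (n - m + r, n - m)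
  rw [Finset.sum_sigma', Finset.sum_sigma']
  apply Finset.sum_nbij' (fun p => ⟨n - p.1 + p.2, n - p.1⟩) (fun q => ⟨n - q.2, q.1 - q.2⟩)
  · rintro ⟨m, r⟩ hp
    simp only [Finset.mem_sigma, Finset.mem_range] at hp ⊢
    omega
  · rintro ⟨k, j⟩ hq
    simp only [Finset.mem_sigma, Finset.mem_range] at hq ⊢
    omega
  · rintro ⟨m, r⟩ hp
    simp only [Finset.mem_sigma, Finset.mem_range] at hp
    simp only [Sigma.mk.inj_iff]
    constructor
    · omega
    · exact heq_of_eq (by omega)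
  · rintro ⟨k, j⟩ hq
    simp only [Finset.mem_sigma, Finset.mem_range] at hq
    simp only [Sigma.mk.inj_iff]
    constructor
    · omega
    · exact heq_of_eq (by omega)
  · rintro ⟨m, r⟩ hp
    simp only [Finset.mem_sigma, Finset.mem_range] at hp
    have h2 : n - (n - m) = m := by omega
    have h4 : n - m + r - (n - m) = r := by omega
    simp only [h2, h4]

noncomputable def pCoef (n : ℕ) (α β : ℝ) (k : ℕ) : ℝ :=
  genBinom ((n : ℝ) + α) (n - k) * genBinom ((n : ℝ) + α + β + k) k

set_option maxHeartbeats 1000000 in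
lemma key_identity (n : ℕ) (hn : 1 ≤ n) (α β : ℝ) (hα : -1 < α) (t : ℝ) :
    -(2*(n:ℝ)+α+β) * (t*(t+1)) * (∑ k ∈ Finset.range n, ((k:ℝ)+1) * pCoef n α β (k+1) * t^k)
      + ((n:ℝ)*((n:ℝ)+β) + (n:ℝ)*(2*(n:ℝ)+α+β)*t) * (∑ k ∈ Finset.range (n+1), pCoef n α β k * t^k)
      = ((n:ℝ)+α)*((n:ℝ)+β) * (∑ k ∈ Finset.range n, pCoef (n-1) α β k * t^k) := by
  have hNα : (0:ℝ) < (n:ℝ) + α := by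
    have : (1:ℝ) ≤ (n:ℝ) := by exact_mod_cast hn
    linarith
  set N := (n:ℝ) with hN
  set D := 2*N+α+β with hD
  set P : ℕ → ℝ := fun k => pCoef n α β k with hPdef
  set Q : ℕ → ℝ := fun k => pCoef (n-1) α β k with hQdef
  set A : ℕ → ℝ := fun k => (N*(N+β) - D*k) * P k - (N+α)*(N+β) * (if k < n then Q k else 0) with hAdef
  set B : ℕ → ℝ := fun k => D*(N-k) * P k with hBdef
  -- termwise identity
  have hterm : ∀ k, k < n → A (k+1) + B k = 0 := by
    intro k hk
    have hcn1 : ((n-1 : ℕ) : ℝ) = N - 1 := by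
      rw [hN]; push_cast [Nat.cast_sub hn]; ring
    rcases Nat.lt_or_ge (k+1) n with hlt | hge
    · -- main case : k + 2 ≤ n
      obtain ⟨j, hj⟩ : ∃ j, n = k + 2 + j := ⟨n - (k+2), by omega⟩
      have hk1 : n - (k+1) = j + 1 := by omega
      have hk0 : n - k = j + 2 := by omega
      have hq1 : (n-1) - (k+1) = j := by omega
      have hcN : N = (k:ℝ) + 2 + (j:ℝ) := by rw [hN, hj]; push_cast; ring
      simp only [hAdef, hBdef, hPdef, hQdef, pCoef, hk1, hk0, hq1, if_pos hlt]
      have hcn : (n:ℝ) = (k:ℝ) + 2 + (j:ℝ) := by rw [← hN]; exact hcN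
      rw [hD, hcn1, hcN, hcn]
      set X := (k:ℝ) + 2 + (j:ℝ) with hX
      have hXα : X + α ≠ 0 := by
        have h0 : (0:ℝ) ≤ (k:ℝ) := Nat.cast_nonneg k
        have h1 : (0:ℝ) ≤ (j:ℝ) := Nat.cast_nonneg j
        rw [hX]; nlinarith
      rw [show X - 1 + α + β + ((k+1:ℕ):ℝ) = X + α + β + ((k:ℕ):ℝ) by push_cast; ring]
      set g := genBinom (X + α) (j+1) with hg
      set h := genBinom (X + α + β + (k:ℕ)) k with hh
      have F1 := genBinom_absorb (X + α) (j+1)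
      have F2 := genBinom_absorb' (X - 1 + α) j
      rw [show X - 1 + α + 1 = X + α by ring] at F2
      have F3 := genBinom_absorb' (X + α + β + (k:ℕ)) k
      rw [show X + α + β + ((k:ℕ):ℝ) + 1 = X + α + β + ((k+1:ℕ):ℝ) by push_cast; ring] at F3
      have F4 := genBinom_absorb (X + α + β + (k:ℕ)) k
      push_cast at F1 F4
      set G2 := genBinom (X + α) (j+2) with hG2
      set G3 := genBinom (X + α + β + ((k+1:ℕ):ℝ)) (k+1) with hG3
      set G4 := genBinom (X + α + β + ((k:ℕ):ℝ)) (k+1) with hG4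
      set G5 := genBinom (X - 1 + α) j with hG5
      have hne1 : ((j:ℝ)+1+1) ≠ 0 := by positivity
      have hne2 : ((k:ℝ)+1) ≠ 0 := by positivity
      have eG2 : G2 = (X + α - ((j:ℝ)+1)) * g / ((j:ℝ)+1+1) := by
        rw [eq_div_iff hne1]; linear_combination F1
      have eG5 : G5 = ((j:ℝ)+1) * g / (X + α) := by
        rw [eq_div_iff hXα]; linear_combination -F2
      have eG3 : G3 = (X + α + β + ((k+1:ℕ):ℝ)) * h / ((k:ℝ)+1) := by
        rw [eq_div_iff hne2]; linear_combination F3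
      have eG4 : G4 = (X + α + β) * h / ((k:ℝ)+1) := by
        rw [eq_div_iff hne2]; linear_combination F4
      rw [eG2, eG3, eG4, eG5]
      push_cast
      rw [hX]
      have hXα' : (k:ℝ) + 2 + (j:ℝ) + α ≠ 0 := hXα
      field_simp
      ring
    · -- boundary case : k + 1 = n
      have hkn' : k + 1 = n := by omega
      subst hkn'
      have hsub1 : k + 1 - k = 1 := by omega
      simp only [hAdef, hBdef, hPdef, hQdef, pCoef, Nat.sub_self, hsub1,
        if_neg (lt_irrefl (k+1)), genBinom_zero, one_mul, mul_zero, sub_zero]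
      have g1 : genBinom (((k+1:ℕ):ℝ) + α) 1 = ((k+1:ℕ):ℝ) + α := by
        have h0 := genBinom_absorb (((k+1:ℕ):ℝ) + α) 0
        simpa [genBinom_zero] using h0
      rw [g1]
      have F := genBinom_absorb' (((k+1:ℕ):ℝ) + α + β + (k:ℕ)) k
      rw [show ((k+1:ℕ):ℝ) + α + β + ((k:ℕ):ℝ) + 1 = ((k+1:ℕ):ℝ) + α + β + ((k+1:ℕ):ℝ) by
        push_cast; ring] at F
      rw [hD, hN]
      push_cast at F ⊢
      linear_combination (-((k:ℝ) + 1 + α)) * F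
  -- assemble
  set S0 := ∑ k ∈ Finset.range (n+1), P k * t^k with hS0
  set S1 := ∑ k ∈ Finset.range n, ((k:ℝ)+1) * P (k+1) * t^k with hS1
  set T0 := ∑ k ∈ Finset.range n, Q k * t^k with hT0
  have e1 : ∑ k ∈ Finset.range (n+1), (k:ℝ) * P k * t^k = t * S1 := by
    rw [Finset.sum_range_succ']
    simp only [Nat.cast_zero, zero_mul, pow_zero, mul_one, add_zero]
    rw [hS1, Finset.mul_sum]
    apply Finset.sum_congr rfl
    intro k _
    push_cast
    ring
  have e2 : ∑ k ∈ Finset.range (n+1), (if k < n then Q k else 0) * t^k = T0 := by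
    rw [Finset.sum_range_succ]
    simp only [lt_irrefl, if_false, zero_mul, add_zero]
    apply Finset.sum_congr rfl
    intro k hk
    rw [if_pos (Finset.mem_range.mp hk)]
  have eA : ∑ k ∈ Finset.range (n+1), A k * t^k
      = (N*(N+β)) * S0 - D * (t * S1) - ((N+α)*(N+β)) * T0 := by
    have hc : ∀ k ∈ Finset.range (n+1), A k * t^k
        = (N*(N+β)) * (P k * t^k) - D * ((k:ℝ) * P k * t^k)
          - ((N+α)*(N+β)) * ((if k < n then Q k else 0) * t^k) := by
      intro k _; simp only [hAdef]; ring
    rw [Finset.sum_congr rfl hc, Finset.sum_sub_distrib, Finset.sum_sub_distrib,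
      ← Finset.mul_sum, ← Finset.mul_sum, ← Finset.mul_sum, e1, e2, hS0]
  have eB : ∑ k ∈ Finset.range (n+1), B k * t^(k+1)
      = (D*N*t) * S0 - (D*t) * (t * S1) := by
    have hc : ∀ k ∈ Finset.range (n+1), B k * t^(k+1)
        = (D*N*t) * (P k * t^k) - (D*t) * ((k:ℝ) * P k * t^k) := by
      intro k _; simp only [hBdef, pow_succ]; ring
    rw [Finset.sum_congr rfl hc, Finset.sum_sub_distrib,
      ← Finset.mul_sum, ← Finset.mul_sum, e1, hS0]
  have hsum : ∑ k ∈ Finset.range (n+1), A k * t^k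
      + ∑ k ∈ Finset.range (n+1), B k * t^(k+1) = 0 := by
    rw [Finset.sum_range_succ' (fun k => A k * t ^ k) n,
      Finset.sum_range_succ (fun k => B k * t^(k+1)) n]
    have hA0 : A 0 = 0 := by
      simp only [hAdef, Nat.cast_zero, mul_zero, sub_zero, if_pos (show 0 < n by omega),
        hPdef, hQdef, pCoef]
      simp only [Nat.sub_zero, Nat.cast_zero, add_zero, genBinom_zero, mul_one]
      have hcn1 : ((n-1 : ℕ) : ℝ) = N - 1 := by
        rw [hN]; push_cast [Nat.cast_sub hn]; ring
      have F0 := genBinom_absorb' (((n-1:ℕ):ℝ) + α) (n-1)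
      rw [show (n-1) + 1 = n by omega] at F0
      rw [show ((n-1:ℕ):ℝ) + α + 1 = N + α by rw [hcn1]; ring] at F0
      rw [hcn1] at F0 ⊢
      push_cast at F0 ⊢
      linear_combination (N + β) * F0
    have hBn : B n = 0 := by simp [hBdef, hN]
    rw [hA0, hBn]
    simp only [zero_mul, mul_zero, add_zero]
    rw [← Finset.sum_add_distrib]
    apply Finset.sum_eq_zero
    intro k hk
    have h := hterm k (Finset.mem_range.mp hk)
    linear_combination t^(k+1) * h
  linear_combination hsum - eA - eB

lemma jacobiP_eq_sum' (n : ℕ) (α β : ℝ) (x : ℝ) :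
    jacobiP n α β x = ∑ k ∈ Finset.range (n + 1), pCoef n α β k * ((x - 1) / 2) ^ k :=
  jacobiP_eq_sum n α β x

lemma hasDerivAt_jacobiP (n : ℕ) (α β : ℝ) (x : ℝ) :
    HasDerivAt (fun y => jacobiP n α β y)
      ((1/2) * ∑ k ∈ Finset.range n, ((k:ℝ)+1) * pCoef n α β (k+1) * ((x-1)/2)^k) x := by
  have h2 : HasDerivAt (fun y => ∑ k ∈ Finset.range (n+1), pCoef n α β k * ((y-1)/2)^k)
      (∑ k ∈ Finset.range (n+1), pCoef n α β k * ((k:ℝ) * ((x-1)/2)^(k-1) * (1/2))) x := by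
    apply HasDerivAt.fun_sum
    intro k _
    exact (((hasDerivAt_id x).sub_const 1).div_const 2 |>.pow k).const_mul _
  have h3 : (∑ k ∈ Finset.range (n+1), pCoef n α β k * ((k:ℝ) * ((x-1)/2)^(k-1) * (1/2)))
      = (1/2) * ∑ k ∈ Finset.range n, ((k:ℝ)+1) * pCoef n α β (k+1) * ((x-1)/2)^k := by
    rw [Finset.sum_range_succ']
    simp only [Nat.cast_zero, zero_mul, mul_zero, add_zero, zero_mul]
    rw [Finset.mul_sum]
    apply Finset.sum_congr rfl
    intro k _
    simp only [Nat.add_sub_cancel]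
    push_cast
    ring
  rw [h3] at h2
  apply h2.congr_of_eventuallyEq
  exact Filter.Eventually.of_forall fun y => jacobiP_eq_sum' n α β y

lemma key_x (n : ℕ) (hn : 1 ≤ n) (α β : ℝ) (hα : -1 < α) (x : ℝ) :
    (2*(n:ℝ)+α+β) * (1 - x^2) * ((1/2) * ∑ k ∈ Finset.range n, ((k:ℝ)+1) * pCoef n α β (k+1) * ((x-1)/2)^k)
      = (n:ℝ)*(α-β-(2*(n:ℝ)+α+β)*x) * jacobiP n α β x
        + 2*((n:ℝ)+α)*((n:ℝ)+β)*jacobiP (n-1) α β x := by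
  have hk := key_identity n hn α β hα ((x-1)/2)
  rw [jacobiP_eq_sum' n α β x, jacobiP_eq_sum' (n-1) α β x,
    show n - 1 + 1 = n from by omega]
  linear_combination (2:ℝ) * hk

theorem stmt13 (n : ℕ) (hn : 1 ≤ n) (α β : ℝ) (hα : -1 < α) (hβ : -1 < β)
    (L : ℝ) (hL : L = 2 * n + α + β + 1)
    (Y : ℝ → ℝ)
    (hY : ∀ x ∈ Set.Ioo (-1 : ℝ) 1,
      Y x = (1 - x) ^ ((α + 1) / 2) * (1 + x) ^ ((β + 1) / 2) * jacobiP n α β x)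
    (x : ℝ) (hx : x ∈ Set.Ioo (-1 : ℝ) 1) (hP : jacobiP n α β x ≠ 0) :
    deriv Y x / Y x = ((n : ℝ) + β + 1) / (2 * (1 + x)) - ((n : ℝ) + α + 1) / (2 * (1 - x))
      + ((n : ℝ) * (α - β) + 2 * ((n : ℝ) + α) * ((n : ℝ) + β) *
          (jacobiP (n - 1) α β x / jacobiP n α β x)) / ((L - 1) * (1 - x ^ 2)) := by
  obtain ⟨hx1, hx2⟩ := hx
  have h1 : (0:ℝ) < 1 - x := by linarith
  have h2 : (0:ℝ) < 1 + x := by linarith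
  have hn1 : (1:ℝ) ≤ (n:ℝ) := by exact_mod_cast hn
  have hD : (0:ℝ) < 2*(n:ℝ)+α+β := by linarith
  set a := (α + 1) / 2 with ha
  set b := (β + 1) / 2 with hb
  set P' := (1/2) * ∑ k ∈ Finset.range n, ((k:ℝ)+1) * pCoef n α β (k+1) * ((x-1)/2)^k with hP'
  -- derivatives of factors
  have hu : HasDerivAt (fun y : ℝ => (1 - y) ^ a) (a * (1 - x) ^ (a - 1) * (-1)) x := by
    have hin : HasDerivAt (fun y : ℝ => 1 - y) (-1) x := by
      simpa using (hasDerivAt_const x (1:ℝ)).fun_sub (hasDerivAt_id' x)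
    exact (Real.hasDerivAt_rpow_const (Or.inl (ne_of_gt h1))).comp x hin
  have hv : HasDerivAt (fun y : ℝ => (1 + y) ^ b) (b * (1 + x) ^ (b - 1) * 1) x := by
    have hin : HasDerivAt (fun y : ℝ => 1 + y) (1) x := by
      simpa using (hasDerivAt_const x (1:ℝ)).fun_add (hasDerivAt_id' x)
    exact (Real.hasDerivAt_rpow_const (Or.inl (ne_of_gt h2))).comp x hin
  have hw := hasDerivAt_jacobiP n α β x
  have hF : HasDerivAt (fun y => (1 - y) ^ a * (1 + y) ^ b * jacobiP n α β y)
      ((a * (1 - x) ^ (a - 1) * (-1)) * ((1 + x) ^ b) * jacobiP n α β x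
        + (1 - x) ^ a * (b * (1 + x) ^ (b - 1) * 1) * jacobiP n α β x
        + (1 - x) ^ a * (1 + x) ^ b * P') x := by
    have := (hu.fun_mul hv).fun_mul hw
    refine this.congr_deriv ?_
    ring
  have hYd : deriv Y x = (a * (1 - x) ^ (a - 1) * (-1)) * ((1 + x) ^ b) * jacobiP n α β x
        + (1 - x) ^ a * (b * (1 + x) ^ (b - 1) * 1) * jacobiP n α β x
        + (1 - x) ^ a * (1 + x) ^ b * P' := by
    have hev : Y =ᶠ[nhds x] (fun y => (1 - y) ^ a * (1 + y) ^ b * jacobiP n α β y) := by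
      filter_upwards [Ioo_mem_nhds hx1 hx2] with y hy
      exact hY y hy
    rw [hev.deriv_eq]
    exact hF.deriv
  -- rpow simplifications
  have hA : (1 - x) ^ (a - 1) = (1 - x) ^ a / (1 - x) :=
    Real.rpow_sub_one (ne_of_gt h1) a
  have hB : (1 + x) ^ (b - 1) = (1 + x) ^ b / (1 + x) :=
    Real.rpow_sub_one (ne_of_gt h2) b
  have hApos : (0:ℝ) < (1 - x) ^ a := Real.rpow_pos_of_pos h1 a
  have hBpos : (0:ℝ) < (1 + x) ^ b := Real.rpow_pos_of_pos h2 b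
  -- key identity solved for P'
  have hDne : (2*(n:ℝ)+α+β) * (1 - x^2) ≠ 0 := by
    have : (0:ℝ) < 1 - x^2 := by nlinarith
    positivity
  have hP'eq : P' = ((n:ℝ)*(α-β-(2*(n:ℝ)+α+β)*x) * jacobiP n α β x
        + 2*((n:ℝ)+α)*((n:ℝ)+β)*jacobiP (n-1) α β x) / ((2*(n:ℝ)+α+β) * (1 - x^2)) := by
    rw [eq_div_iff hDne]
    linear_combination key_x n hn α β hα x
  have hL1 : L - 1 = 2*(n:ℝ)+α+β := by rw [hL]; ring
  rw [hYd, hY x ⟨hx1, hx2⟩, hA, hB, hP'eq, hL1]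
  have hx2ne : (1:ℝ) - x^2 ≠ 0 := by nlinarith
  have hDne' : 2*(n:ℝ)+α+β ≠ 0 := by linarith
  rw [ha, hb]
  field_simp
  ring
end
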